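/- arXiv:math/0503723 — 5 statements merged into one kernel-verified Lean document; each statement's English description precedes it below -/
import Mathlib

section
/- Let n ≥ 2 and p > 0. If f is holomorphic on the unit polydisc U^n and the quantity Σ_{k=1}^n |∂f/∂z_k(z)| (1−|z_k|²)^p tends to 0 as z tends to the boundary ∂U^n (i.e., for every ε > 0 there is δ > 0 such that the sum is < ε whenever dist(z, ∂U^n) < δ), then f is constant on U^n. -/
open Metric Set Filter

noncomputable section

def polydisc (n : ℕ) : Set (Fin n → ℂ) := {z | ∀ j, ‖z j‖ < 1}

def blochSum (n : ℕ) (p : ℝ) (f : (Fin n → ℂ) → ℂ) (z : Fin n → ℂ) : ℝ :=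
  ∑ k : Fin n, ‖fderiv ℂ f z (Pi.single k 1)‖ * (1 - ‖z k‖ ^ 2) ^ p

def blochNorm (n : ℕ) (p : ℝ) (f : (Fin n → ℂ) → ℂ) : ℝ :=
  ‖f 0‖ + sSup (blochSum n p f '' polydisc n)

def MemBloch (n : ℕ) (p : ℝ) (f : (Fin n → ℂ) → ℂ) : Prop :=
  DifferentiableOn ℂ f (polydisc n) ∧ BddAbove (blochSum n p f '' polydisc n)

def IsPolyFn (n : ℕ) (g : (Fin n → ℂ) → ℂ) : Prop :=
  ∃ P : MvPolynomial (Fin n) ℂ, ∀ z, g z = MvPolynomial.eval z P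

def MemLittleBloch (n : ℕ) (p : ℝ) (f : (Fin n → ℂ) → ℂ) : Prop :=
  MemBloch n p f ∧ ∀ ε : ℝ, 0 < ε →
    ∃ g, IsPolyFn n g ∧ blochNorm n p (fun z => f z - g z) < ε

def MemLittleStarBloch (n : ℕ) (p : ℝ) (f : (Fin n → ℂ) → ℂ) : Prop :=
  MemBloch n p f ∧ ∀ z : ℕ → Fin n → ℂ, (∀ j, z j ∈ polydisc n) →
    (∀ k, Tendsto (fun j => ‖z j k‖) atTop (nhds 1)) →
    Tendsto (fun j => blochSum n p f (z j)) atTop (nhds 0)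

def HoloSelfMap (n : ℕ) (φ : (Fin n → ℂ) → Fin n → ℂ) : Prop :=
  DifferentiableOn ℂ φ (polydisc n) ∧ ∀ z ∈ polydisc n, φ z ∈ polydisc n

def compSum (n : ℕ) (p q : ℝ) (φ : (Fin n → ℂ) → Fin n → ℂ) (z : Fin n → ℂ) : ℝ :=
  ∑ k : Fin n, ∑ l : Fin n, ‖fderiv ℂ φ z (Pi.single k 1) l‖ *
    ((1 - ‖z k‖ ^ 2) ^ q / (1 - ‖φ z l‖ ^ 2) ^ p)

lemma polydisc_eq (n : ℕ) :
    polydisc n = Set.pi Set.univ (fun _ : Fin n => Metric.ball (0:ℂ) 1) := by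
  ext z
  simp [polydisc, Set.mem_pi, mem_ball_zero_iff]

lemma isOpen_polydisc (n : ℕ) : IsOpen (polydisc n) := by
  rw [polydisc_eq]; exact isOpen_set_pi finite_univ (fun _ _ => isOpen_ball)

lemma closure_polydisc (n : ℕ) :
    closure (polydisc n) = Set.pi Set.univ (fun _ : Fin n => Metric.closedBall (0:ℂ) 1) := by
  rw [polydisc_eq, closure_pi_set]
  simp [closure_ball (0:ℂ) one_ne_zero]

lemma update_mem_polydisc {n : ℕ} {z : Fin n → ℂ} (hz : z ∈ polydisc n) (k : Fin n) {ζ : ℂ}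
    (hζ : ‖ζ‖ < 1) : Function.update z k ζ ∈ polydisc n := by
  intro j
  rcases eq_or_ne j k with rfl | hj
  · simpa using hζ
  · simpa [Function.update_of_ne hj] using hz j

lemma update_mem_frontier {n : ℕ} {z : Fin n → ℂ} (hz : z ∈ polydisc n) (l : Fin n)
    {u : ℂ} (hu : ‖u‖ = 1) : Function.update z l u ∈ frontier (polydisc n) := by
  rw [frontier, (isOpen_polydisc n).interior_eq]
  constructor
  · rw [closure_polydisc]
    intro j _
    rcases eq_or_ne j l with rfl | hj
    · simp [mem_closedBall_zero_iff, hu]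
    · simp only [Function.update_of_ne hj, mem_closedBall_zero_iff]
      exact le_of_lt (by simpa using hz j)
  · intro hmem
    have := hmem l
    simp [hu] at this

lemma infDist_update_le {n : ℕ} {z : Fin n → ℂ} (hz : z ∈ polydisc n) (l : Fin n)
    {w : ℂ} (hw0 : w ≠ 0) (hw1 : ‖w‖ < 1) :
    Metric.infDist (Function.update z l w) (frontier (polydisc n)) ≤ 1 - ‖w‖ := by
  have hwpos : (0:ℝ) < ‖w‖ := norm_pos_iff.mpr hw0
  have hu : ‖((‖w‖ : ℂ))⁻¹ * w‖ = 1 := by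
    rw [norm_mul, norm_inv, Complex.norm_real, Real.norm_eq_abs, abs_of_pos hwpos]
    field_simp
  refine le_trans (Metric.infDist_le_dist_of_mem (update_mem_frontier hz l hu)) ?_
  rw [dist_pi_le_iff (by linarith)]
  intro j
  rcases eq_or_ne j l with rfl | hj
  · simp only [Function.update_self]
    rw [dist_eq_norm]
    have key : w - ((‖w‖ : ℂ))⁻¹ * w = (1 - ((‖w‖ : ℂ))⁻¹) * w := by ring
    rw [key, norm_mul]
    have h1 : (1 - ((‖w‖ : ℂ))⁻¹) = (((1 - (‖w‖)⁻¹ : ℝ)) : ℂ) := by push_cast; ring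
    rw [h1, Complex.norm_real, Real.norm_eq_abs]
    have hinv : (1:ℝ) ≤ (‖w‖)⁻¹ := by
      rw [le_inv_comm₀ one_pos hwpos] <;> simpa using hw1.le
    rw [abs_of_nonpos (by linarith)]
    have : ‖w‖ * (‖w‖)⁻¹ = 1 := mul_inv_cancel₀ (ne_of_gt hwpos)
    nlinarith
  · rw [Function.update_of_ne hj, Function.update_of_ne hj, dist_self]
    linarith

lemma term_le_blochSum {n : ℕ} (p : ℝ) (f : (Fin n → ℂ) → ℂ) {z : Fin n → ℂ}
    (hz : z ∈ polydisc n) (k : Fin n) :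
    ‖fderiv ℂ f z (Pi.single k 1)‖ * (1 - ‖z k‖ ^ 2) ^ p
      ≤ blochSum n p f z := by
  refine Finset.single_le_sum (f := fun j : Fin n => ‖fderiv ℂ f z (Pi.single j 1)‖ * (1 - ‖z j‖ ^ 2) ^ p) (fun j _ => ?_) (Finset.mem_univ k)
  refine mul_nonneg (norm_nonneg _) (Real.rpow_nonneg ?_ p)
  have h1 := hz j
  have h0 := norm_nonneg (z j)
  nlinarith

lemma hasDerivAt_slice {n : ℕ} {f : (Fin n → ℂ) → ℂ} (hf : DifferentiableOn ℂ f (polydisc n))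
    {x : Fin n → ℂ} (k : Fin n) {ξ : ℂ} (hmem : Function.update x k ξ ∈ polydisc n) :
    HasDerivAt (fun t : ℂ => f (Function.update x k t))
      (fderiv ℂ f (Function.update x k ξ) (Pi.single k 1)) ξ := by
  have hdf : DifferentiableAt ℂ f (Function.update x k ξ) :=
    hf.differentiableAt ((isOpen_polydisc n).mem_nhds hmem)
  exact hdf.hasFDerivAt.comp_hasDerivAt ξ (hasDerivAt_update x k ξ)

lemma slice_const {n : ℕ} {p : ℝ} (hp : 0 < p) {f : (Fin n → ℂ) → ℂ}
    (hf : DifferentiableOn ℂ f (polydisc n))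
    (hlim : ∀ ε : ℝ, 0 < ε → ∃ δ : ℝ, 0 < δ ∧ ∀ z ∈ polydisc n,
      Metric.infDist z (frontier (polydisc n)) < δ → blochSum n p f z < ε)
    {k l : Fin n} (hkl : k ≠ l) {z : Fin n → ℂ} (hz : z ∈ polydisc n)
    {ζ : ℂ} (hζ : ‖ζ‖ < 1) : f (Function.update z k ζ) = f z := by
  have hzk : ‖z k‖ < 1 := hz k
  have hzl : ‖z l‖ < 1 := hz l
  set r0 : ℝ := max (‖ζ‖) (‖z k‖) with hr0def
  have hr0lt : r0 < 1 := max_lt hζ hzk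
  have hr0nn : 0 ≤ r0 := le_max_of_le_left (norm_nonneg ζ)
  set C : ℝ := (1 - r0 ^ 2) ^ p with hCdef
  have hCpos : 0 < C := Real.rpow_pos_of_pos (by nlinarith) p
  set h : ℂ → ℂ := fun w =>
    f (Function.update (Function.update z k ζ) l w) - f (Function.update z l w) with hhdef
  -- differentiability of h on the unit disc
  have hdiff : ∀ w : ℂ, ‖w‖ < 1 → DifferentiableAt ℂ h w := by
    intro w hw
    have h1 := (hasDerivAt_slice hf l
      (update_mem_polydisc (update_mem_polydisc hz k hζ) l hw)).differentiableAt
    have h2 := (hasDerivAt_slice hf l (update_mem_polydisc hz l hw)).differentiableAt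
    exact h1.sub h2
  -- near-boundary smallness of h
  have key : ∀ ε : ℝ, 0 < ε → ∃ δ : ℝ, 0 < δ ∧ δ ≤ 1/2 ∧
      ∀ w : ℂ, 1 - δ < ‖w‖ → ‖w‖ < 1 → ‖h w‖ ≤ ε := by
    intro ε hε
    set D : ℝ := ‖ζ - z k‖ with hDdef
    have hDnn : 0 ≤ D := norm_nonneg _
    set ε' : ℝ := ε * C / (D + 1) with hε'def
    have hε'pos : 0 < ε' := by positivity
    obtain ⟨δ, hδpos, hδ⟩ := hlim ε' hε'pos
    refine ⟨min δ (1/2), by positivity, min_le_right _ _, ?_⟩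
    intro w hw1 hw2
    have hwlow : 1 - δ < ‖w‖ := lt_of_le_of_lt (by
      have := min_le_left δ (1/2); linarith) hw1
    have hwhalf : (1:ℝ)/2 ≤ ‖w‖ := by
      have := min_le_right δ (1/2); linarith
    have hw0 : w ≠ 0 := by
      intro hw; rw [hw] at hwhalf; simp at hwhalf; linarith
    set X : Fin n → ℂ := Function.update z l w with hXdef
    have hX : X ∈ polydisc n := update_mem_polydisc hz l hw2
    set G : ℂ → ℂ := fun ξ => f (Function.update X k ξ) with hGdef
    -- rewrite h w
    have hhw : h w = G ζ - G (z k) := by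
      have e1 : Function.update (Function.update z k ζ) l w = Function.update X k ζ :=
        Function.update_comm hkl ζ w z
      have e2 : Function.update X k (z k) = X := by
        have hXk : X k = z k := Function.update_of_ne hkl w z
        rw [← hXk]
        exact Function.update_eq_self k X
      rw [hhdef]
      simp only [e1, hGdef]
      rw [e2]
    rw [hhw]
    -- mean value bound on the closed ball of radius r0
    set s0 : Set ℂ := Metric.closedBall (0:ℂ) r0 with hs0def
    have hmem : ∀ ξ ∈ s0, Function.update X k ξ ∈ polydisc n := by
      intro ξ hξ
      refine update_mem_polydisc hX k ?_
      have : ‖ξ‖ ≤ r0 := by simpa [hs0def, mem_closedBall_zero_iff] using hξ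
      linarith
    set F' : ℂ → (ℂ →L[ℂ] ℂ) := fun ξ => ContinuousLinearMap.smulRight (1 : ℂ →L[ℂ] ℂ)
      (fderiv ℂ f (Function.update X k ξ) (Pi.single k 1)) with hF'def
    have hGd : ∀ ξ ∈ s0, HasFDerivWithinAt G (F' ξ) s0 ξ := by
      intro ξ hξ
      exact ((hasDerivAt_slice hf k (hmem ξ hξ)).hasDerivWithinAt).hasFDerivWithinAt
    have hbound : ∀ ξ ∈ s0, ‖F' ξ‖ ≤ ε' / C := by
      intro ξ hξ
      have hξr : ‖ξ‖ ≤ r0 := by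
        have : ‖ξ‖ ≤ r0 := by simpa [hs0def, mem_closedBall_zero_iff] using hξ
        exact this
      have hmemξ := hmem ξ hξ
      -- infDist estimate
      have hYeq : Function.update X k ξ = Function.update (Function.update z k ξ) l w :=
        (Function.update_comm hkl ξ w z).symm
      have hinf : Metric.infDist (Function.update X k ξ) (frontier (polydisc n)) < δ := by
        rw [hYeq]
        refine lt_of_le_of_lt (infDist_update_le (update_mem_polydisc hz k
          (lt_of_le_of_lt hξr hr0lt)) l hw0 (by assumption)) ?_
        linarith
      have hbs := hδ _ hmemξ hinf
      have hterm := term_le_blochSum p f hmemξ k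
      have hYk : (Function.update X k ξ) k = ξ := Function.update_self k ξ X
      rw [hYk] at hterm
      have hCle : C ≤ (1 - ‖ξ‖ ^ 2) ^ p := by
        refine Real.rpow_le_rpow (by nlinarith) (by nlinarith [norm_nonneg ξ]) hp.le
      have habs : ‖fderiv ℂ f (Function.update X k ξ) (Pi.single k 1)‖ ≤ ε' / C := by
        rw [le_div_iff₀ hCpos]
        calc ‖fderiv ℂ f (Function.update X k ξ) (Pi.single k 1)‖ * C
            ≤ ‖fderiv ℂ f (Function.update X k ξ) (Pi.single k 1)‖
              * (1 - ‖ξ‖ ^ 2) ^ p :=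
              mul_le_mul_of_nonneg_left hCle (norm_nonneg _)
          _ ≤ blochSum n p f (Function.update X k ξ) := hterm
          _ ≤ ε' := hbs.le
      rw [hF'def]
      simp only [ContinuousLinearMap.norm_smulRight_apply, ContinuousLinearMap.one_def,
        ContinuousLinearMap.norm_id, one_mul]
      assumption
    have hζs : ζ ∈ s0 := by
      simp only [hs0def, mem_closedBall_zero_iff]
      exact le_max_left _ _
    have hzks : z k ∈ s0 := by
      simp only [hs0def, mem_closedBall_zero_iff]
      exact le_max_right _ _
    have hmvt := (convex_closedBall (0:ℂ) r0).norm_image_sub_le_of_norm_hasFDerivWithin_le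
      hGd hbound hzks hζs
    refine le_trans hmvt ?_
    have hDeq : ‖ζ - z k‖ = D := rfl
    rw [hDeq]
    have heq : ε' / C = ε / (D + 1) := by
      rw [hε'def]
      field_simp
    rw [heq, div_mul_eq_mul_div, div_le_iff₀ (by linarith)]
    nlinarith
  -- maximum modulus principle: |h (z l)| ≤ ε for every ε > 0
  have hmax : ∀ ε : ℝ, 0 < ε → ‖h (z l)‖ ≤ ε := by
    intro ε hε
    obtain ⟨δ, hδpos, hδhalf, hδ⟩ := key ε hε
    set r : ℝ := max (1 - δ/2) ((1 + ‖z l‖)/2) with hrdef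
    have habsl : 0 ≤ ‖z l‖ := norm_nonneg _
    have hr1 : r < 1 := max_lt (by linarith) (by linarith)
    have hr0 : 0 < r := lt_of_lt_of_le (by linarith) (le_max_right _ _)
    have hzlr : ‖z l‖ < r := lt_of_lt_of_le (by linarith) (le_max_right _ _)
    have hcl : closure (Metric.ball (0:ℂ) r) = Metric.closedBall (0:ℂ) r :=
      closure_ball (0:ℂ) hr0.ne'
    have hdc : DiffContOnCl ℂ h (Metric.ball (0:ℂ) r) := by
      refine DifferentiableOn.diffContOnCl ?_
      rw [hcl]
      intro ξ hξ
      have : ‖ξ‖ ≤ r := by simpa [mem_closedBall_zero_iff] using hξ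
      exact (hdiff ξ (by linarith)).differentiableWithinAt
    have hfr : ∀ w ∈ frontier (Metric.ball (0:ℂ) r), ‖h w‖ ≤ ε := by
      intro w hw
      rw [frontier_ball (0:ℂ) hr0.ne'] at hw
      have hwr : ‖w‖ = r := by simpa [mem_sphere_zero_iff_norm] using hw
      refine hδ w ?_ ?_
      · rw [hwr]
        have : 1 - δ/2 ≤ r := le_max_left _ _
        linarith
      · rw [hwr]; exact hr1
    have := Complex.norm_le_of_forall_mem_frontier_norm_le isBounded_ball hdc hfr
      (subset_closure (by simpa [mem_ball_zero_iff] using hzlr))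
    exact this
  -- conclude h (z l) = 0
  have hzero : h (z l) = 0 := by
    by_contra hne
    have hpos : 0 < ‖h (z l)‖ := norm_pos_iff.mpr hne
    have := hmax (‖h (z l)‖ / 2) (by linarith)
    linarith
  have e1 : Function.update z l (z l) = z := Function.update_eq_self l z
  have e2 : Function.update (Function.update z k ζ) l (z l) = Function.update z k ζ := by
    have h1 : (Function.update z k ζ) l = z l := Function.update_of_ne hkl.symm ζ z
    rw [← h1]
    exact Function.update_eq_self l (Function.update z k ζ)
  have := hzero
  rw [hhdef] at this
  simp only [e1, e2] at this
  exact sub_eq_zero.mp this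

/-- If the Bloch-type quantity of a holomorphic function on the polydisc tends to 0
at the boundary, then the function is constant. -/
theorem constant_of_blochSum_tendsto_zero_at_boundary
    (n : ℕ) (hn : 2 ≤ n) (p : ℝ) (hp : 0 < p)
    (f : (Fin n → ℂ) → ℂ) (hf : DifferentiableOn ℂ f (polydisc n))
    (hlim : ∀ ε : ℝ, 0 < ε → ∃ δ : ℝ, 0 < δ ∧ ∀ z ∈ polydisc n,
      Metric.infDist z (frontier (polydisc n)) < δ → blochSum n p f z < ε) :
    ∀ z ∈ polydisc n, ∀ w ∈ polydisc n, f z = f w := by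
  have indep : ∀ (k : Fin n) (z : Fin n → ℂ), z ∈ polydisc n → ∀ ζ : ℂ, ‖ζ‖ < 1 →
      f (Function.update z k ζ) = f z := by
    intro k z hz ζ hζ
    obtain ⟨l, hkl⟩ : ∃ l : Fin n, k ≠ l := by
      by_cases hk : k = ⟨0, by omega⟩
      · refine ⟨⟨1, by omega⟩, ?_⟩
        subst hk
        intro hcon
        simpa using congrArg Fin.val hcon
      · exact ⟨⟨0, by omega⟩, hk⟩
    exact slice_const hp hf hlim hkl hz hζ
  intro z hz w hw
  have claim : ∀ i : ℕ, i ≤ n → f (fun j => if (j : ℕ) < i then w j else z j) = f z := by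
    intro i
    induction i with
    | zero =>
      intro _
      congr 1
    | succ i ih =>
      intro hi
      have hin : i ≤ n := by omega
      set k : Fin n := ⟨i, by omega⟩ with hkdef
      set A : Fin n → ℂ := fun j => if (j : ℕ) < i then w j else z j with hAdef
      have hA : A ∈ polydisc n := by
        intro j
        rw [hAdef]
        dsimp only
        split_ifs
        · exact hw j
        · exact hz j
      have hki : (k : ℕ) = i := rfl
      have hstep : (fun j : Fin n => if (j : ℕ) < i + 1 then w j else z j)
          = Function.update A k (w k) := by
        funext j
        rcases eq_or_ne j k with rfl | hj
        · rw [Function.update_self, if_pos (by omega)]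
        · rw [Function.update_of_ne hj, hAdef]
          have hji : (j : ℕ) ≠ i := fun hji => hj (Fin.ext (by omega))
          dsimp only
          by_cases hlt : (j : ℕ) < i
          · rw [if_pos hlt, if_pos (by omega)]
          · rw [if_neg hlt, if_neg (by omega)]
      rw [hstep, indep k A hA (w k) (hw k), ih hin]
  have hfin := claim n le_rfl
  have hweq : (fun j : Fin n => if (j : ℕ) < n then w j else z j) = w := by
    funext j
    rw [if_pos j.isLt]
  rw [hweq] at hfin
  exact hfin.symm
end
end

section
/- Let 0 < p < 1 and let f be holomorphic on U^n with ‖f‖_p < ∞. Then for every z ∈ U^n, |f(z)| ≤ |f(0)| + (n/(1−p))·‖f‖_p. -/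
open Metric Set Filter

noncomputable section

open intervalIntegral in
lemma aux_integral_rpow_neg {p : ℝ} (hp0 : 0 < p) (hp1 : p < 1) :
    ∫ x in (0:ℝ)..1, x ^ (-p) = 1 / (1 - p) := by
  rw [integral_rpow (Or.inl (by linarith))]
  rw [Real.zero_rpow (by linarith), Real.one_rpow]
  rw [show -p + 1 = 1 - p by ring]
  norm_num

/-- Lemma 1 (1): growth estimate for functions in the p-Bloch space, 0 < p < 1. -/
theorem bloch_growth_lt_one (n : ℕ) (p : ℝ) (hp0 : 0 < p) (hp1 : p < 1)
    (f : (Fin n → ℂ) → ℂ) (hf : MemBloch n p f) :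
    ∀ z ∈ polydisc n,
      ‖f z‖ ≤ ‖f 0‖ + ((n : ℝ) / (1 - p)) * blochNorm n p f := by
  obtain ⟨hdiff, hbdd⟩ := hf
  intro z hz
  set M := sSup (blochSum n p f '' polydisc n) with hMdef
  have hopen : IsOpen (polydisc n) := by
    have : polydisc n = ⋂ j, {w : Fin n → ℂ | ‖w j‖ < 1} := by
      ext w; simp [polydisc]
    rw [this]
    exact isOpen_iInter_of_finite fun j =>
      isOpen_lt (continuous_norm.comp (continuous_apply j)) continuous_const
  have h0mem : (0 : Fin n → ℂ) ∈ polydisc n := by show ∀ j, _; intro j; simp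
  have hsum_le : ∀ w ∈ polydisc n, blochSum n p f w ≤ M := fun w hw =>
    le_csSup hbdd ⟨w, hw, rfl⟩
  have hM0 : 0 ≤ M := by
    refine le_trans ?_ (hsum_le 0 h0mem)
    refine Finset.sum_nonneg fun k _ => mul_nonneg (norm_nonneg _) ?_
    refine Real.rpow_nonneg ?_ _
    simp
  -- the one-variable slice
  set G : ℂ → ℂ := fun w => f (w • z) with hGdef
  set S : Set ℂ := {w : ℂ | w • z ∈ polydisc n} with hSdef
  have hSopen : IsOpen S := hopen.preimage (continuous_id.smul continuous_const)
  have hmemS : ∀ t : ℝ, t ∈ Set.Icc (0:ℝ) 1 → (t : ℂ) ∈ S := by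
    intro t ht; show ∀ j, _; intro j
    have : ‖(t:ℂ) * z j‖ = |t| * ‖z j‖ := by
      rw [norm_mul, Complex.norm_real, Real.norm_eq_abs]
    simp only [Pi.smul_apply, smul_eq_mul, this]
    have h1 : |t| ≤ 1 := abs_le.mpr ⟨by linarith [ht.1], ht.2⟩
    calc |t| * ‖z j‖ ≤ 1 * ‖z j‖ :=
          mul_le_mul_of_nonneg_right h1 (norm_nonneg _)
      _ < 1 := by rw [one_mul]; exact (show ∀ j, ‖z j‖ < 1 from hz) j
  have hGdiff : DifferentiableOn ℂ G S := by
    refine DifferentiableOn.comp hdiff ?_ ?_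
    · exact (differentiable_id.smul_const z).differentiableOn
    · intro w hw; exact hw
  have hGan : AnalyticOnNhd ℂ G S := hGdiff.analyticOnNhd hSopen
  have hGderivCont : ContinuousOn (deriv G) S := hGan.deriv.continuousOn
  -- derivative identification
  have hDG : ∀ w ∈ S, HasDerivAt G (fderiv ℂ f (w • z) z) w := by
    intro w hw
    have hfd : HasFDerivAt f (fderiv ℂ f (w • z)) (w • z) :=
      ((hdiff (w • z) hw).differentiableAt (hopen.mem_nhds hw)).hasFDerivAt
    have hsm : HasDerivAt (fun u : ℂ => u • z) z w := by
      simpa using (hasDerivAt_id w).smul_const z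
    exact hfd.comp_hasDerivAt w hsm
  have hderiv_eq : ∀ w ∈ S, deriv G w = fderiv ℂ f (w • z) z := fun w hw =>
    (hDG w hw).deriv
  -- FTC
  set g' : ℝ → ℂ := fun t => deriv G ((t : ℂ)) with hg'def
  have hcont : ContinuousOn g' (Set.uIcc (0:ℝ) 1) := by
    rw [Set.uIcc_of_le (by norm_num : (0:ℝ) ≤ 1)]
    exact (hGderivCont.comp Complex.continuous_ofReal.continuousOn
      fun t ht => hmemS t ht)
  have hint : IntervalIntegrable g' MeasureTheory.volume 0 1 :=
    hcont.intervalIntegrable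
  have hFTC : ∫ t in (0:ℝ)..1, g' t = f z - f 0 := by
    have := intervalIntegral.integral_eq_sub_of_hasDerivAt (f := fun t : ℝ => G t)
      (f' := g') (a := 0) (b := 1) ?_ hint
    · rw [this]; simp [hGdef]
    · intro t ht
      rw [Set.uIcc_of_le (by norm_num : (0:ℝ) ≤ 1)] at ht
      have hS := hmemS t ht
      have h1 : HasDerivAt G (fderiv ℂ f ((t:ℂ) • z) z) (t:ℂ) := hDG _ hS
      have h2 : deriv G (t:ℂ) = fderiv ℂ f ((t:ℂ) • z) z := h1.deriv
      rw [hg'def]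
      simp only [h2]
      exact h1.comp_ofReal
  -- pointwise bound
  set bound : ℝ → ℝ := fun t => (n : ℝ) * M * (1 - t) ^ (-p) with hbounddef
  have hptwise : ∀ t ∈ Set.Ico (0:ℝ) 1, ‖g' t‖ ≤ bound t := by
    intro t ht
    have htI : t ∈ Set.Icc (0:ℝ) 1 := ⟨ht.1, le_of_lt ht.2⟩
    have hS := hmemS t htI
    set w : Fin n → ℂ := (t : ℂ) • z with hwdef
    have hw : w ∈ polydisc n := hS
    have h1t : (0:ℝ) < 1 - t := by linarith [ht.2]
    have hpos : (0:ℝ) < (1 - t) ^ p := Real.rpow_pos_of_pos h1t p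
    -- each partial derivative bound
    have hk : ∀ k : Fin n, ‖fderiv ℂ f w (Pi.single k 1)‖ ≤ M / (1 - t) ^ p := by
      intro k
      have habs : ‖w k‖ ≤ t := by
        have : ‖w k‖ = |t| * ‖z k‖ := by
          simp [hwdef, norm_mul, Complex.norm_real]
        rw [this, abs_of_nonneg ht.1]
        calc t * ‖z k‖ ≤ t * 1 :=
              mul_le_mul_of_nonneg_left (le_of_lt ((show ∀ j, ‖z j‖ < 1 from hz) k)) ht.1
          _ = t := mul_one t
      have hd : (1:ℝ) - t ≤ 1 - ‖w k‖ ^ 2 := by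
        have h1 : ‖w k‖ ^ 2 ≤ t ^ 2 :=
          pow_le_pow_left₀ (norm_nonneg _) habs 2
        have h2 : t ^ 2 ≤ t := by nlinarith [ht.1, ht.2]
        linarith
      have hrp : (1 - t) ^ p ≤ (1 - ‖w k‖ ^ 2) ^ p :=
        Real.rpow_le_rpow (le_of_lt h1t) hd (le_of_lt hp0)
      have hterm : ‖fderiv ℂ f w (Pi.single k 1)‖ *
          (1 - ‖w k‖ ^ 2) ^ p ≤ M := by
        refine le_trans ?_ (hsum_le w hw)
        refine Finset.single_le_sum (f := fun l : Fin n =>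
          ‖fderiv ℂ f w (Pi.single l 1)‖ * (1 - ‖w l‖ ^ 2) ^ p)
          ?_ (Finset.mem_univ k)
        intro l _
        refine mul_nonneg (norm_nonneg _) (Real.rpow_nonneg ?_ _)
        have := (show ∀ j, ‖w j‖ < 1 from hw) l
        nlinarith [norm_nonneg (w l)]
      rw [le_div_iff₀ hpos]
      calc ‖fderiv ℂ f w (Pi.single k 1)‖ * (1 - t) ^ p
          ≤ ‖fderiv ℂ f w (Pi.single k 1)‖ * (1 - ‖w k‖ ^ 2) ^ p :=
            mul_le_mul_of_nonneg_left hrp (norm_nonneg _)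
        _ ≤ M := hterm
    -- expand z in the basis
    have hzz : (fderiv ℂ f w) z = ∑ k : Fin n, z k • (fderiv ℂ f w) (Pi.single k 1) := by
      conv_lhs => rw [← Finset.univ_sum_single z]
      rw [map_sum]
      refine Finset.sum_congr rfl fun k _ => ?_
      have : Pi.single k (z k) = z k • (Pi.single k 1 : Fin n → ℂ) := by
        funext j
        by_cases h : j = k
        · subst h; simp
        · simp [Pi.single_apply, h]
      rw [this, map_smul]
    have hg'eq : g' t = (fderiv ℂ f w) z := hderiv_eq _ hS
    rw [hg'eq, hzz]
    calc ‖∑ k : Fin n, z k • (fderiv ℂ f w) (Pi.single k 1)‖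
        ≤ ∑ k : Fin n, ‖z k • (fderiv ℂ f w) (Pi.single k 1)‖ := norm_sum_le _ _
      _ ≤ ∑ k : Fin n, M / (1 - t) ^ p := by
          refine Finset.sum_le_sum fun k _ => ?_
          rw [norm_smul]
          calc ‖z k‖ * ‖(fderiv ℂ f w) (Pi.single k 1)‖
              ≤ 1 * (M / (1 - t) ^ p) := by
                refine mul_le_mul ?_ ?_ (norm_nonneg _) zero_le_one
                · exact le_of_lt ((show ∀ j, ‖z j‖ < 1 from hz) k)
                · exact hk k
            _ = M / (1 - t) ^ p := one_mul _
      _ = bound t := by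
          simp only [Finset.sum_const, Finset.card_univ, Fintype.card_fin,
            nsmul_eq_mul, hbounddef]
          rw [Real.rpow_neg (le_of_lt h1t)]
          ring
  -- bound integrability
  have hboundint : IntervalIntegrable bound MeasureTheory.volume 0 1 := by
    have h1 : IntervalIntegrable (fun x : ℝ => x ^ (-p)) MeasureTheory.volume 0 1 :=
      intervalIntegral.intervalIntegrable_rpow' (by linarith)
    have h2 := (h1.comp_sub_left 1).symm
    simpa [hbounddef] using h2.const_mul ((n : ℝ) * M)
  -- integral of the bound
  have hboundval : ∫ t in (0:ℝ)..1, bound t = (n : ℝ) * M * (1 / (1 - p)) := by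
    rw [hbounddef]
    rw [intervalIntegral.integral_const_mul]
    congr 1
    have h3 : ∫ t in (0:ℝ)..1, (1 - t) ^ (-p) =
        ∫ x in (0:ℝ)..1, x ^ (-p) := by
      have := intervalIntegral.integral_comp_sub_left (a := (0:ℝ)) (b := 1)
        (fun x : ℝ => x ^ (-p)) 1
      simpa using this
    rw [h3, aux_integral_rpow_neg hp0 hp1]
  -- ae comparison
  have hintnorm : IntervalIntegrable (fun t => ‖g' t‖) MeasureTheory.volume 0 1 :=
    hint.norm
  have hcompare : ∫ t in (0:ℝ)..1, ‖g' t‖ ≤ ∫ t in (0:ℝ)..1, bound t := by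
    refine intervalIntegral.integral_mono_ae_restrict (by norm_num) hintnorm hboundint ?_
    have hne : ∀ᵐ t : ℝ ∂MeasureTheory.volume, t ≠ 1 := by
      rw [MeasureTheory.ae_iff]
      simpa using Real.volume_singleton
    have hne' := MeasureTheory.ae_restrict_of_ae
      (s := Set.Icc (0:ℝ) 1) hne
    have hmem := MeasureTheory.ae_restrict_mem (μ := MeasureTheory.volume)
      (measurableSet_Icc (a := (0:ℝ)) (b := 1))
    filter_upwards [hne', hmem] with t ht1 ht2
    exact hptwise t ⟨ht2.1, lt_of_le_of_ne ht2.2 ht1⟩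
  -- put it together
  have hnormbound : ‖f z - f 0‖ ≤ (n : ℝ) * M * (1 / (1 - p)) := by
    rw [← hFTC]
    calc ‖∫ t in (0:ℝ)..1, g' t‖ ≤ ∫ t in (0:ℝ)..1, ‖g' t‖ :=
          intervalIntegral.norm_integral_le_integral_norm (by norm_num)
      _ ≤ ∫ t in (0:ℝ)..1, bound t := hcompare
      _ = (n : ℝ) * M * (1 / (1 - p)) := hboundval
  have hMle : M ≤ blochNorm n p f := by
    rw [blochNorm, ← hMdef]
    have := norm_nonneg (f 0)
    linarith
  have hfrac : (0:ℝ) ≤ (n : ℝ) / (1 - p) := by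
    apply div_nonneg (Nat.cast_nonneg n); linarith
  calc ‖f z‖ = ‖f 0 + (f z - f 0)‖ := by ring_nf
    _ ≤ ‖f 0‖ + ‖f z - f 0‖ := norm_add_le _ _
    _ ≤ ‖f 0‖ + (n : ℝ) * M * (1 / (1 - p)) := by
        linarith [hnormbound]
    _ ≤ ‖f 0‖ + ((n : ℝ) / (1 - p)) * blochNorm n p f := by
        have : (n : ℝ) * M * (1 / (1 - p)) = ((n : ℝ) / (1 - p)) * M := by ring
        rw [this]
        have := mul_le_mul_of_nonneg_left hMle hfrac
        linarith
end
end

section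
/- Let p = 1 and let f be holomorphic on U^n with ‖f‖_1 < ∞. Then for every z ∈ U^n, |f(z)| ≤ (1 + 1/(n·ln 2)) · (Σ_{k=1}^n ln(2/(1−|z_k|²))) · ‖f‖_1. -/
open Metric Set Filter

noncomputable section

lemma pi_single_decomp (n : ℕ) (z : Fin n → ℂ) :
    z = ∑ k : Fin n, (z k) • (Pi.single k (1 : ℂ) : Fin n → ℂ) := by
  funext j
  simp [Finset.sum_apply, Pi.single_apply]

/-- Lemma 1 (2): growth estimate for functions in the 1-Bloch space. -/
theorem bloch_growth_eq_one (n : ℕ) (hn : 0 < n)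
    (f : (Fin n → ℂ) → ℂ) (hf : MemBloch n 1 f) :
    ∀ z ∈ polydisc n,
      ‖f z‖ ≤ (1 + 1 / ((n : ℝ) * Real.log 2)) *
        (∑ k : Fin n, Real.log (2 / (1 - ‖z k‖ ^ 2))) * blochNorm n 1 f := by
  intro z hz
  set S := sSup (blochSum n 1 f '' polydisc n) with hSdef
  set r : Fin n → ℝ := fun k => ‖z k‖ with hrdef
  have hr0 : ∀ k, 0 ≤ r k := fun k => norm_nonneg _
  have hr1 : ∀ k, r k < 1 := hz
  have h0mem : (0 : Fin n → ℂ) ∈ polydisc n := fun j => by simp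
  have hS0 : 0 ≤ S := by
    refine le_trans ?_ (le_csSup hf.2 ⟨0, h0mem, rfl⟩)
    exact Finset.sum_nonneg fun k _ => mul_nonneg (norm_nonneg _)
      (Real.rpow_nonneg (by simp) _)
  -- membership of segment points
  have hmem : ∀ t ∈ Icc (0:ℝ) 1, t • z ∈ polydisc n := by
    intro t ht j
    have habs : ‖(t • z) j‖ = |t| * ‖z j‖ := by
      rw [Pi.smul_apply, norm_smul, Real.norm_eq_abs]
    rw [habs]
    calc |t| * ‖z j‖ ≤ 1 * ‖z j‖ := by
          apply mul_le_mul_of_nonneg_right _ (norm_nonneg _)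
          rw [abs_of_nonneg ht.1]; exact ht.2
      _ < 1 := by rw [one_mul]; exact hz j
  -- each partial derivative term is bounded by S
  have key : ∀ w ∈ polydisc n, ∀ k : Fin n,
      ‖fderiv ℂ f w (Pi.single k 1)‖ * (1 - ‖w k‖ ^ 2) ≤ S := by
    intro w hw k
    have hsum : blochSum n 1 f w ≤ S := le_csSup hf.2 ⟨w, hw, rfl⟩
    have heq : blochSum n 1 f w = ∑ j : Fin n,
        ‖fderiv ℂ f w (Pi.single j 1)‖ * (1 - ‖w j‖ ^ 2) := by
      unfold blochSum; simp [Real.rpow_one]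
    rw [heq] at hsum
    refine le_trans ?_ hsum
    exact Finset.single_le_sum
      (f := fun j => ‖(fderiv ℂ f w) (Pi.single j 1)‖ * (1 - ‖w j‖ ^ 2))
      (fun j _ => mul_nonneg (norm_nonneg _)
      (by nlinarith [hw j, norm_nonneg (w j)])) (Finset.mem_univ k)
  -- derivative of the radial function
  have hDf : ∀ t ∈ Icc (0:ℝ) 1,
      HasDerivAt (fun s : ℝ => f (s • z)) (fderiv ℂ f (t • z) z) t := by
    intro t ht
    have hd : HasFDerivAt f (fderiv ℂ f (t • z)) (t • z) :=
      (hf.1.differentiableAt ((isOpen_polydisc n).mem_nhds (hmem t ht))).hasFDerivAt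
    have hc : HasDerivAt (fun s : ℝ => s • z) z t := by
      simpa using (hasDerivAt_id t).smul_const z
    have := (hd.restrictScalars ℝ).comp_hasDerivAt t hc
    exact this
  -- bound functions
  set B : ℝ → ℝ := fun t => ∑ k : Fin n, S * (-Real.log (1 - t * r k)) with hBdef
  set B' : ℝ → ℝ := fun t => ∑ k : Fin n, S * (r k / (1 - t * r k)) with hB'def
  have hpos : ∀ t ∈ Icc (0:ℝ) 1, ∀ k, 0 < 1 - t * r k := by
    intro t ht k
    nlinarith [hr1 k, hr0 k, ht.1, ht.2]
  have hB' : ∀ t ∈ Ico (0:ℝ) 1, HasDerivAt B (B' t) t := by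
    intro t ht
    apply HasDerivAt.fun_sum
    intro k _
    have h1 : HasDerivAt (fun s : ℝ => 1 - s * r k) (-(r k)) t := by
      simpa using ((hasDerivAt_id t).mul_const (r k)).const_sub 1
    have hne : (1 - t * r k) ≠ 0 := (hpos t (Ico_subset_Icc_self ht) k).ne'
    have h2 := ((h1.log hne).neg).const_mul S
    convert h2 using 1
    · rfl
    · rfl
    · ring
  -- pointwise derivative bound
  have hbound : ∀ t ∈ Ico (0:ℝ) 1,
      ‖fderiv ℂ f (t • z) z‖ ≤ B' t := by
    intro t ht
    have hmemt := hmem t (Ico_subset_Icc_self ht)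
    have hL : ∀ T : (Fin n → ℂ) →L[ℂ] ℂ, T z = ∑ k : Fin n, z k • T (Pi.single k (1:ℂ)) := by
      intro T
      conv_lhs => rw [pi_single_decomp n z]
      rw [map_sum]
      simp
    rw [hL (fderiv ℂ f (t • z))]
    refine le_trans (norm_sum_le _ _) (Finset.sum_le_sum ?_)
    intro k _
    set a := ‖fderiv ℂ f (t • z) (Pi.single k (1:ℂ))‖ with hadef
    have ha : 0 ≤ a := norm_nonneg _
    have habs : ‖(t • z) k‖ = t * r k := by
      rw [Pi.smul_apply, norm_smul, Real.norm_eq_abs,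
        abs_of_nonneg ht.1]
    have hk := key (t • z) hmemt k
    rw [habs] at hk
    have hpk := hpos t (Ico_subset_Icc_self ht) k
    have htr : 0 ≤ t * r k := mul_nonneg ht.1 (hr0 k)
    have htr1 : t * r k < 1 := by nlinarith
    have hsq : (t * r k) ^ 2 ≤ t * r k := by nlinarith
    have hstep : a * (1 - t * r k) ≤ S := by nlinarith
    have hgoal : r k * a * (1 - t * r k) ≤ S * r k := by nlinarith [hr0 k]
    have : ‖z k • fderiv ℂ f (t • z) (Pi.single k (1:ℂ))‖ = r k * a := by
      rw [smul_eq_mul, norm_mul]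
    rw [this, show S * (r k / (1 - t * r k)) = S * r k / (1 - t * r k) from
      (mul_div_assoc _ _ _).symm, le_div_iff₀ hpk]
    exact hgoal
  -- fencing argument
  have hFcont : ContinuousOn (fun t : ℝ => f (t • z) - f 0) (Icc 0 1) := by
    intro t ht
    exact ((hDf t ht).continuousAt.continuousWithinAt).sub continuousWithinAt_const
  have hF' : ∀ t ∈ Ico (0:ℝ) 1,
      HasDerivWithinAt (fun s : ℝ => f (s • z) - f 0) (fderiv ℂ f (t • z) z) (Ici t) t := by
    intro t ht
    exact ((hDf t (Ico_subset_Icc_self ht)).sub_const _).hasDerivWithinAt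
  have hBcont : ContinuousOn B (Icc 0 1) := by
    apply continuousOn_finset_sum
    intro k _
    apply ContinuousOn.mul continuousOn_const
    apply ContinuousOn.neg
    apply ContinuousOn.log
    · exact (continuous_const.sub (continuous_id.mul continuous_const)).continuousOn
    · intro t ht; exact (hpos t ht k).ne'
  have hB'w : ∀ t ∈ Ico (0:ℝ) 1, HasDerivWithinAt B (B' t) (Ici t) t :=
    fun t ht => (hB' t ht).hasDerivWithinAt
  have hfa : ‖f ((0:ℝ) • z) - f 0‖ ≤ B 0 := by
    simp [hBdef]
  have main := image_norm_le_of_norm_deriv_right_le_deriv_boundary' hFcont hF' hfa hBcont hB'w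
    (fun t ht => by exact hbound t ht)
    (right_mem_Icc.mpr zero_le_one)
  have hmain : ‖f z - f 0‖ ≤ B 1 := by
    simpa using main
  -- B 1 ≤ S * L
  set L := ∑ k : Fin n, Real.log (2 / (1 - r k ^ 2)) with hLdef
  have hterm : ∀ k : Fin n, -Real.log (1 - r k) ≤ Real.log (2 / (1 - r k ^ 2)) := by
    intro k
    have h1 : (0:ℝ) < 1 - r k := by nlinarith [hr1 k]
    have h2 : (0:ℝ) < 1 - r k ^ 2 := by nlinarith [hr0 k, hr1 k]
    rw [← Real.log_inv]
    apply Real.log_le_log (by positivity)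
    rw [inv_eq_one_div, div_le_div_iff₀ h1 h2]
    nlinarith [hr0 k]
  have hB1 : B 1 ≤ S * L := by
    rw [hBdef, hLdef, Finset.mul_sum]
    apply Finset.sum_le_sum
    intro k _
    simp only [one_mul]
    exact mul_le_mul_of_nonneg_left (hterm k) hS0
  -- lower bound on L
  have hlog2 : (0:ℝ) < Real.log 2 := Real.log_pos (by norm_num)
  have hc : (0:ℝ) < (n : ℝ) * Real.log 2 := by positivity
  have hLge : (n : ℝ) * Real.log 2 ≤ L := by
    rw [hLdef]
    calc (n : ℝ) * Real.log 2 = ∑ _k : Fin n, Real.log 2 := by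
          simp [Finset.sum_const, mul_comm]
      _ ≤ ∑ k : Fin n, Real.log (2 / (1 - r k ^ 2)) := by
          apply Finset.sum_le_sum
          intro k _
          apply Real.log_le_log (by norm_num)
          have h2 : (0:ℝ) < 1 - r k ^ 2 := by nlinarith [hr0 k, hr1 k]
          rw [le_div_iff₀ h2]
          nlinarith [hr0 k]
  have hLnn : 0 ≤ L := le_trans hc.le hLge
  -- assemble
  have habs_split : ‖f z‖ ≤ ‖f 0‖ + ‖f z - f 0‖ := by
    calc ‖f z‖ = ‖f 0 + (f z - f 0)‖ := by ring_nf
      _ ≤ _ := norm_add_le _ _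
  have hfinal : ‖f z‖ ≤ ‖f 0‖ + S * L :=
    le_trans habs_split (by linarith [le_trans hmain hB1])
  have hbn : blochNorm n 1 f = ‖f 0‖ + S := rfl
  rw [hbn]
  set a := ‖f 0‖ with hadef
  have ha : 0 ≤ a := norm_nonneg _
  set c := (n : ℝ) * Real.log 2 with hcdef
  have hexp : (1 + 1 / c) * L * (a + S) = L * a + L * S + (L / c) * a + (L / c) * S := by
    field_simp
    ring
  have hp1 : a ≤ (L / c) * a := by
    have h1 : (1:ℝ) ≤ L / c := (one_le_div hc).mpr hLge
    calc a = 1 * a := (one_mul a).symm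
      _ ≤ (L / c) * a := mul_le_mul_of_nonneg_right h1 ha
  have hnn1 : 0 ≤ L * a := mul_nonneg hLnn ha
  have hnn2 : 0 ≤ (L / c) * S := mul_nonneg (by positivity) hS0
  linarith [hfinal]
end
end

section
/- Fix p > 0, an index l ∈ {1,…,n}, and w ∈ ℂ with |w| < 1. Define f_w : U^n → ℂ by f_w(z) = ∫_0^{z_l} (1 − w̄ t)^{−p} dt (the integral taken along the straight segment from 0 to z_l in the unit disc). Then f_w is holomorphic on U^n, ‖f_w‖_p ≤ 2^p, and f_w lies in the little p-Bloch space B^p_0(U^n), i.e., f_w is the limit in the norm ‖·‖_p of a sequence of polynomials. -/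
open Metric Set Filter

noncomputable section

/-! ### Auxiliary lemmas -/

lemma slit_of_abs_lt_one {u : ℂ} (hu : ‖u‖ < 1) : (1 - u) ∈ Complex.slitPlane := by
  rw [Complex.mem_slitPlane_iff]
  left
  have : u.re ≤ ‖u‖ := Complex.re_le_norm u
  simp only [Complex.sub_re, Complex.one_re]
  linarith

lemma hasDerivAt_inner (v c : ℂ) (s : ℂ) (x : ℂ) (h : ‖v * (s * x)‖ < 1) :
    HasDerivAt (fun x : ℂ => (1 - v * (s * x)) ^ c)
      (c * (1 - v * (s * x)) ^ (c - 1) * (-(v * s))) x := by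
  have hin : HasDerivAt (fun x : ℂ => 1 - v * (s * x)) (-(v * s)) x := by
    have : HasDerivAt (fun x : ℂ => v * (s * x)) (v * s) x := by
      simpa [← mul_assoc] using ((hasDerivAt_id x).const_mul (v * s))
    simpa using this.const_sub 1
  exact hin.cpow_const (slit_of_abs_lt_one h)

lemma contOn_integrand (v c x : ℂ)
    (h : ∀ s : ℝ, s ∈ uIcc (0:ℝ) 1 → ‖v * ((s:ℂ) * x)‖ < 1) :
    ContinuousOn (fun s : ℝ => (1 - v * ((s:ℂ) * x)) ^ c) (uIcc (0:ℝ) 1) := by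
  intro s hs
  apply ContinuousAt.continuousWithinAt
  have hc : ContinuousAt (fun t : ℂ => t ^ c) (1 - v * ((s:ℂ) * x)) :=
    continuousAt_cpow_const (slit_of_abs_lt_one (h s hs))
  have hin : ContinuousAt (fun t : ℝ => 1 - v * ((t:ℂ) * x)) s := by fun_prop
  exact ContinuousAt.comp (g := fun t : ℂ => t ^ c)
    (f := fun t : ℝ => 1 - v * ((t:ℂ) * x)) hc hin

lemma abs_coe_mem_uIcc {s : ℝ} (hs : s ∈ uIcc (0:ℝ) 1) : ‖(s:ℂ)‖ ≤ 1 := by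
  rw [Set.uIcc_of_le zero_le_one] at hs
  rw [Complex.norm_real, Real.norm_eq_abs, _root_.abs_of_nonneg hs.1]
  exact hs.2

lemma one_sub_abs_le (u : ℂ) : 1 - ‖u‖ ≤ ‖1 - u‖ := by
  have := norm_sub_norm_le (1:ℂ) u
  simpa using this

lemma abs_cpow_le' (u : ℂ) (a : ℝ) (ha : a ≤ 0) {b : ℝ} (hb : 0 < b)
    (hba : b ≤ 1 - ‖u‖) :
    ‖(1 - u) ^ (a : ℂ)‖ ≤ b ^ a := by
  rw [Complex.norm_cpow_real]
  exact Real.rpow_le_rpow_of_nonpos hb (le_trans hba (one_sub_abs_le u)) ha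

lemma mem_uIcc_of_uIoc {s : ℝ} (hs : s ∈ Set.uIoc (0:ℝ) 1) : s ∈ uIcc (0:ℝ) 1 := by
  rw [Set.uIoc_of_le zero_le_one] at hs
  rw [Set.uIcc_of_le zero_le_one]
  exact ⟨hs.1.le, hs.2⟩

lemma keyDeriv (p : ℝ) (hp : 0 < p) (w : ℂ) (hw : ‖w‖ < 1)
    (ζ : ℂ) (hζ : ‖ζ‖ < 1) :
    HasDerivAt (fun x : ℂ => x * ∫ s in (0:ℝ)..1, (1 - (starRingEnd ℂ) w * ((s:ℂ) * x)) ^ (-(p:ℂ)))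
      ((1 - (starRingEnd ℂ) w * ζ) ^ (-(p:ℂ))) ζ := by
  set v : ℂ := (starRingEnd ℂ) w with hv
  have hva : ‖v‖ < 1 := by rwa [hv, Complex.norm_conj]
  set r : ℝ := (1 + ‖ζ‖) / 2 with hrdef
  have hr1 : r < 1 := by rw [hrdef]; linarith
  have hr0 : ‖ζ‖ < r := by rw [hrdef]; linarith
  have hrnn : 0 ≤ r := by positivity
  set ε : ℝ := (1 - ‖ζ‖) / 2 with hεdef
  have hε : 0 < ε := by rw [hεdef]; linarith
  have hball : ∀ x ∈ ball ζ ε, ‖x‖ ≤ r := by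
    intro x hx
    have := mem_ball_iff_norm.mp hx
    have h2 : ‖x‖ - ‖ζ‖ ≤ ‖x - ζ‖ := by
      simpa using norm_sub_norm_le x ζ
    rw [hrdef]; rw [hεdef] at this; linarith
  have hsm : ∀ (s : ℝ), s ∈ uIcc (0:ℝ) 1 → ∀ (x : ℂ), ‖x‖ ≤ r →
      ‖v * ((s:ℂ) * x)‖ ≤ r := by
    intro s hs x hx
    calc ‖v * ((s:ℂ) * x)‖ = ‖v‖ * (‖(s:ℂ)‖ * ‖x‖) := by
          simp [map_mul]
      _ ≤ 1 * (1 * r) := by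
          apply mul_le_mul hva.le _ (by positivity) zero_le_one
          exact mul_le_mul (abs_coe_mem_uIcc hs) hx (norm_nonneg x) zero_le_one
      _ = r := by ring
  have hsm' : ∀ (s : ℝ), s ∈ uIcc (0:ℝ) 1 → ∀ (x : ℂ), ‖x‖ ≤ r →
      ‖v * ((s:ℂ) * x)‖ < 1 := fun s hs x hx => lt_of_le_of_lt (hsm s hs x hx) hr1
  set c : ℂ := -(p:ℂ) with hcdef
  set F' : ℂ → ℝ → ℂ := fun x s => c * (1 - v * ((s:ℂ) * x)) ^ (c - 1) * (-(v * (s:ℂ))) with hF'def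
  set bound : ℝ → ℝ := fun _ => p * (1 - r) ^ (-p - 1 : ℝ) with hbdef
  have key := intervalIntegral.hasDerivAt_integral_of_dominated_loc_of_deriv_le
    (μ := MeasureTheory.volume) (F := fun x s => (1 - v * ((s:ℂ) * x)) ^ c) (F' := F')
    (x₀ := ζ) (a := 0) (b := 1) (bound := bound) (ball_mem_nhds ζ hε)
    ?_ ?_ ?_ ?_ ?_ ?_
  · obtain ⟨hInt', hI⟩ := key
    have hF_int : IntervalIntegrable (fun s : ℝ => (1 - v * ((s:ℂ) * ζ)) ^ c)
        MeasureTheory.volume 0 1 :=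
      (contOn_integrand v c ζ (fun s hs => hsm' s hs ζ hr0.le)).intervalIntegrable
    have hmul := (hasDerivAt_id ζ).mul hI
    simp only [one_mul, id] at hmul
    have heq : (∫ s in (0:ℝ)..1, (1 - v * ((s:ℂ) * ζ)) ^ c) + ζ * (∫ s in (0:ℝ)..1, F' ζ s)
        = (1 - v * ζ) ^ c := by
      rw [← intervalIntegral.integral_const_mul,
        ← intervalIntegral.integral_add hF_int (hInt'.const_mul ζ)]
      have hftc : ∀ s ∈ uIcc (0:ℝ) 1,
          HasDerivAt (fun s : ℝ => (s:ℂ) * (1 - v * ((s:ℂ) * ζ)) ^ c)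
            ((1 - v * ((s:ℂ) * ζ)) ^ c + ζ * F' ζ s) s := by
        intro s hs
        have habs : ‖v * ((s:ℂ) * ζ)‖ < 1 := hsm' s hs ζ hr0.le
        have hG : HasDerivAt (fun y : ℂ => y * (1 - v * (y * ζ)) ^ c)
            (1 * (1 - v * ((s:ℂ) * ζ)) ^ c +
              (s:ℂ) * (c * (1 - v * ((s:ℂ) * ζ)) ^ (c - 1) * (-(v * ζ)))) (s:ℂ) := by
          have hin : HasDerivAt (fun y : ℂ => 1 - v * (y * ζ)) (-(v * ζ)) (s:ℂ) := by
            have : HasDerivAt (fun y : ℂ => v * (y * ζ)) (v * ζ) (s:ℂ) := by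
              have := (hasDerivAt_id ((s:ℂ))).const_mul (v * ζ)
              simp only [mul_one] at this
              convert this using 1
              · rfl
              · rfl
              · funext y; simp only [id_eq]; ring
            simpa using this.const_sub 1
          exact (hasDerivAt_id ((s:ℂ))).mul (hin.cpow_const (slit_of_abs_lt_one habs))
        have := hG.comp_ofReal
        convert this using 1
        rw [hF'def]
        ring
      have := intervalIntegral.integral_eq_sub_of_hasDerivAt hftc
        (hF_int.add (hInt'.const_mul ζ))
      rw [this]
      push_cast
      simp
    rw [heq] at hmul
    exact hmul
  · filter_upwards [ball_mem_nhds ζ hε] with x hx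
    exact ((contOn_integrand v c x (fun s hs => hsm' s hs x (hball x hx))).mono
      (fun s hs => mem_uIcc_of_uIoc hs)).aestronglyMeasurable measurableSet_uIoc
  · exact (contOn_integrand v c ζ (fun s hs => hsm' s hs ζ hr0.le)).intervalIntegrable
  · apply ContinuousOn.aestronglyMeasurable _ measurableSet_uIoc
    apply ContinuousOn.mono _ (fun s hs => mem_uIcc_of_uIoc hs)
    exact (continuousOn_const.mul (contOn_integrand v (c - 1) ζ
      (fun s hs => hsm' s hs ζ hr0.le))).mul (by fun_prop)
  · apply MeasureTheory.ae_of_all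
    intro s hs x hx
    have hs' := mem_uIcc_of_uIoc hs
    have habs : ‖v * ((s:ℂ) * x)‖ ≤ r := hsm s hs' x (hball x hx)
    rw [hF'def]
    simp only [norm_mul, norm_neg]
    have h1 : ‖c‖ = p := by
      rw [hcdef]; simp [Complex.norm_real, abs_of_pos hp]
    have h2 : ‖(1 - v * ((s:ℂ) * x)) ^ (c - 1)‖ ≤ (1 - r) ^ (-p - 1 : ℝ) := by
      have : (c - 1) = ((-p - 1 : ℝ) : ℂ) := by rw [hcdef]; push_cast; ring
      rw [this]
      exact abs_cpow_le' _ _ (by linarith) (by linarith) (by linarith)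
    have h3 : ‖v‖ * ‖(s:ℂ)‖ ≤ 1 := by
      simpa using mul_le_mul hva.le (abs_coe_mem_uIcc hs') (norm_nonneg _) zero_le_one
    have h1r : (0:ℝ) < 1 - r := by linarith
    rw [hbdef]
    calc ‖c‖ * ‖(1 - v * ((s:ℂ) * x)) ^ (c - 1)‖ *
          (‖v‖ * ‖(s:ℂ)‖)
        ≤ p * (1 - r) ^ (-p - 1 : ℝ) * 1 := by
          apply mul_le_mul _ h3 (by positivity) (by positivity)
          rw [h1]
          exact mul_le_mul_of_nonneg_left h2 hp.le
      _ = p * (1 - r) ^ (-p - 1 : ℝ) := by ring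
  · exact intervalIntegrable_const
  · apply MeasureTheory.ae_of_all
    intro s hs x hx
    exact hasDerivAt_inner v c (s:ℂ) x (hsm' s (mem_uIcc_of_uIoc hs) x (hball x hx))

lemma hasFDerivAt_eval {n : ℕ} (l : Fin n) {G : ℂ → ℂ} {G' : ℂ} {z : Fin n → ℂ}
    (hG : HasDerivAt G G' (z l)) :
    HasFDerivAt (fun z : Fin n → ℂ => G (z l))
      ((ContinuousLinearMap.smulRight (1 : ℂ →L[ℂ] ℂ) G').comp
        (ContinuousLinearMap.proj l)) z := by
  have h1 : HasFDerivAt (fun z : Fin n → ℂ => z l)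
      (ContinuousLinearMap.proj l : (Fin n → ℂ) →L[ℂ] ℂ) z :=
    (ContinuousLinearMap.proj l : (Fin n → ℂ) →L[ℂ] ℂ).hasFDerivAt
  exact hG.hasFDerivAt.comp z h1

lemma fderiv_eval {n : ℕ} {l k : Fin n} {G : ℂ → ℂ} {G' : ℂ} {z : Fin n → ℂ}
    (hG : HasDerivAt G G' (z l)) :
    fderiv ℂ (fun z : Fin n → ℂ => G (z l)) z (Pi.single k 1)
      = (Pi.single k 1 : Fin n → ℂ) l * G' := by
  rw [(hasFDerivAt_eval l hG).fderiv]
  simp [ContinuousLinearMap.smulRight_apply, smul_eq_mul]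

lemma blochSum_eval {n : ℕ} (p : ℝ) {l : Fin n} {G : ℂ → ℂ} {G' : ℂ} {z : Fin n → ℂ}
    (hG : HasDerivAt G G' (z l)) :
    blochSum n p (fun z => G (z l)) z
      = ‖G'‖ * (1 - ‖z l‖ ^ 2) ^ p := by
  unfold blochSum
  rw [Finset.sum_eq_single l]
  · rw [fderiv_eval hG, Pi.single_eq_same, one_mul]
  · intro k _ hkl
    rw [fderiv_eval hG, Pi.single_eq_of_ne (Ne.symm hkl), zero_mul, norm_zero, zero_mul]
  · intro h; exact absurd (Finset.mem_univ l) h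

lemma poly_approx (h : ℂ → ℂ) (ρ : ℝ) (hρ : 1 < ρ)
    (hd : DifferentiableOn ℂ h (closedBall (0:ℂ) ρ)) (δ : ℝ) (hδ : 0 < δ) :
    ∃ (N : ℕ) (c : ℕ → ℂ), ∀ ζ : ℂ, ‖ζ‖ ≤ 1 →
      ‖h ζ - ∑ i ∈ Finset.range N, c i * ζ ^ i‖ ≤ δ := by
  set R : NNReal := Real.toNNReal ρ with hRdef
  have hRρ : (R : ℝ) = ρ := Real.coe_toNNReal ρ (by linarith)
  have hR0 : 0 < R := by rw [hRdef]; exact Real.toNNReal_pos.mpr (by linarith)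
  have hd' : DifferentiableOn ℂ h (closedBall (0:ℂ) R) := by rwa [hRρ]
  have hs := hd'.hasFPowerSeriesOnBall hR0
  set r' : NNReal := Real.toNNReal ((1 + ρ) / 2) with hr'def
  have hr'ρ : (r' : ℝ) = (1 + ρ) / 2 := Real.coe_toNNReal _ (by linarith)
  have hr' : (r' : ENNReal) < (R : ENNReal) := by
    rw [ENNReal.coe_lt_coe, ← NNReal.coe_lt_coe, hr'ρ, hRρ]; linarith
  have htu := hs.tendstoUniformlyOn' hr'
  obtain ⟨N, hN⟩ := (Metric.tendstoUniformlyOn_iff.mp htu δ hδ).exists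
  refine ⟨N, fun i => (cauchyPowerSeries h 0 R).coeff i, fun ζ hζ => ?_⟩
  have hmem : ζ ∈ ball (0:ℂ) (r' : ℝ) := by
    rw [mem_ball_zero_iff, hr'ρ]; linarith
  have := hN ζ hmem
  rw [dist_eq_norm] at this
  have hps : (cauchyPowerSeries h 0 R).partialSum N (ζ - 0)
      = ∑ i ∈ Finset.range N, (cauchyPowerSeries h 0 R).coeff i * ζ ^ i := by
    rw [sub_zero]
    unfold FormalMultilinearSeries.partialSum
    refine Finset.sum_congr rfl fun i _ => ?_
    rw [FormalMultilinearSeries.apply_eq_pow_smul_coeff, smul_eq_mul, mul_comm]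
  rw [hps] at this
  exact this.le

/-- Lemma 2: the test function f_w(z) = ∫_0^{z_l} (1 - conj(w) t)^{-p} dt is holomorphic on
the polydisc, has p-Bloch norm at most 2^p, and belongs to the little p-Bloch space. -/
theorem test_function_in_little_bloch (n : ℕ) (p : ℝ) (hp : 0 < p)
    (l : Fin n) (w : ℂ) (hw : ‖w‖ < 1)
    (fw : (Fin n → ℂ) → ℂ)
    (hfw : ∀ z, fw z = z l * ∫ s in (0:ℝ)..1,
      (1 - (starRingEnd ℂ) w * ((s : ℂ) * z l)) ^ (-(p : ℂ))) :
    DifferentiableOn ℂ fw (polydisc n) ∧ blochNorm n p fw ≤ (2 : ℝ) ^ p ∧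
      MemLittleBloch n p fw := by
  have hfw' : fw = fun z : Fin n → ℂ =>
      (fun x : ℂ => x * ∫ s in (0:ℝ)..1,
        (1 - (starRingEnd ℂ) w * ((s : ℂ) * x)) ^ (-(p : ℂ))) (z l) := funext fun z => hfw z
  subst hfw'
  set v : ℂ := (starRingEnd ℂ) w with hv
  have hva : ‖v‖ < 1 := by rwa [hv, Complex.norm_conj]
  set c : ℂ := -(p:ℂ) with hcdef
  set F : ℂ → ℂ := fun x => x * ∫ s in (0:ℝ)..1, (1 - v * ((s:ℂ) * x)) ^ c with hFdef
  have hder : ∀ ζ : ℂ, ‖ζ‖ < 1 → HasDerivAt F ((1 - v * ζ) ^ c) ζ :=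
    fun ζ hζ => keyDeriv p hp w hw ζ hζ
  -- the pointwise bound on the Bloch sum
  have hbound : ∀ ζ : ℂ, ‖ζ‖ < 1 →
      ‖(1 - v * ζ) ^ c‖ * (1 - ‖ζ‖ ^ 2) ^ p ≤ (2:ℝ) ^ p := by
    intro ζ hζ
    set a : ℝ := ‖ζ‖ with hadef
    have ha0 : 0 ≤ a := norm_nonneg ζ
    have ha1 : a < 1 := hζ
    have h1a : (0:ℝ) < 1 - a := by linarith
    have habs : ‖(1 - v * ζ) ^ c‖ ≤ (1 - a) ^ (-p : ℝ) := by
      have hc' : c = ((-p : ℝ) : ℂ) := by rw [hcdef]; push_cast; ring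
      rw [hc']
      apply abs_cpow_le' _ _ (by linarith) h1a
      have : ‖v * ζ‖ ≤ a := by
        rw [norm_mul]
        calc ‖v‖ * a ≤ 1 * a := mul_le_mul_of_nonneg_right hva.le ha0
          _ = a := one_mul a
      linarith
    have hfac : (1 - a ^ 2) ^ p = (1 - a) ^ p * (1 + a) ^ p := by
      rw [← Real.mul_rpow (by linarith) (by linarith)]
      ring_nf
    calc ‖(1 - v * ζ) ^ c‖ * (1 - a ^ 2) ^ p
        ≤ (1 - a) ^ (-p : ℝ) * (1 - a ^ 2) ^ p := by
          apply mul_le_mul_of_nonneg_right habs (Real.rpow_nonneg (by nlinarith) p)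
      _ = (1 + a) ^ p := by
          rw [hfac, ← mul_assoc, ← Real.rpow_add h1a]
          simp
      _ ≤ (2:ℝ) ^ p := Real.rpow_le_rpow (by linarith) (by linarith) hp.le
  -- differentiability
  have hdiff : DifferentiableOn ℂ (fun z : Fin n → ℂ => F (z l)) (polydisc n) := by
    intro z hz
    exact (hasFDerivAt_eval l (hder (z l) (hz l))).differentiableAt.differentiableWithinAt
  have hBSle : ∀ y ∈ blochSum n p (fun z : Fin n → ℂ => F (z l)) '' polydisc n, y ≤ (2:ℝ) ^ p := by
    rintro y ⟨z, hz, rfl⟩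
    rw [blochSum_eval p (hder (z l) (hz l))]
    exact hbound (z l) (hz l)
  have hF0 : F 0 = 0 := by rw [hFdef]; simp
  refine ⟨hdiff, ?_, ⟨hdiff, ⟨(2:ℝ) ^ p, hBSle⟩⟩, ?_⟩
  · -- Bloch norm bound
    unfold blochNorm
    have h0 : ‖(fun z : Fin n → ℂ => F (z l)) 0‖ = 0 := by
      simp only [Pi.zero_apply, hF0, norm_zero]
    rw [h0, zero_add]
    exact Real.sSup_le hBSle (Real.rpow_nonneg (by norm_num) p)
  · -- little Bloch
    intro ε hε
    set ρ : ℝ := 2 / (1 + ‖w‖) with hρdef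
    have hwnn : 0 ≤ ‖w‖ := norm_nonneg w
    have hρ1 : 1 < ρ := by
      rw [hρdef, lt_div_iff₀ (by linarith)]
      linarith
    have hρw : ρ * ‖w‖ < 1 := by
      rw [hρdef, div_mul_eq_mul_div, div_lt_one (by linarith)]
      linarith
    -- h is differentiable on the closed ball of radius ρ
    have hd : DifferentiableOn ℂ (fun ζ : ℂ => (1 - v * ζ) ^ c) (closedBall (0:ℂ) ρ) := by
      intro t ht
      rw [mem_closedBall_zero_iff] at ht
      have habs : ‖v * t‖ < 1 := by
        rw [norm_mul]
        calc ‖v‖ * ‖t‖ ≤ ‖w‖ * ρ := by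
              apply mul_le_mul _ ht (norm_nonneg t) hwnn
              rw [hv, Complex.norm_conj]
          _ = ρ * ‖w‖ := mul_comm _ _
          _ < 1 := hρw
      have hin : HasDerivAt (fun t : ℂ => 1 - v * t) (-v) t := by
        simpa using ((hasDerivAt_id t).const_mul v).const_sub 1
      exact (hin.cpow_const (slit_of_abs_lt_one habs)).differentiableAt.differentiableWithinAt
    obtain ⟨N, cc, hNc⟩ := poly_approx _ ρ hρ1 hd (ε/2) (half_pos hε)
    -- the polynomial antiderivative
    set Q : ℂ → ℂ := fun y => ∑ i ∈ Finset.range N, (cc i / (i+1)) * y ^ (i+1) with hQdef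
    have hQder : ∀ ζ : ℂ, HasDerivAt Q (∑ i ∈ Finset.range N, cc i * ζ ^ i) ζ := by
      intro ζ
      rw [hQdef]
      apply HasDerivAt.fun_sum
      intro i _
      have hne : ((i:ℂ) + 1) ≠ 0 := Nat.cast_add_one_ne_zero i
      have := (hasDerivAt_pow (i+1) ζ).const_mul (cc i / (i+1))
      convert this using 1
      · rfl
      push_cast
      field_simp
    refine ⟨fun z : Fin n → ℂ => Q (z l), ?_, ?_⟩
    · -- it is a polynomial function
      refine ⟨∑ i ∈ Finset.range N, MvPolynomial.C (cc i / (i+1)) * MvPolynomial.X l ^ (i+1),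
        fun z => ?_⟩
      rw [hQdef]
      simp [map_sum]
    · -- the Bloch norm estimate
      have hsub : (fun z : Fin n → ℂ => F (z l) - Q (z l))
          = fun z : Fin n → ℂ => (fun ζ : ℂ => F ζ - Q ζ) (z l) := rfl
      have hsubder : ∀ z ∈ polydisc n, HasDerivAt (fun ζ : ℂ => F ζ - Q ζ)
          ((1 - v * (z l)) ^ c - ∑ i ∈ Finset.range N, cc i * (z l) ^ i) (z l) :=
        fun z hz => (hder (z l) (hz l)).sub (hQder (z l))
      have hbs : ∀ z ∈ polydisc n,
          blochSum n p (fun z : Fin n → ℂ => F (z l) - Q (z l)) z ≤ ε / 2 := by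
        intro z hz
        rw [hsub, blochSum_eval p (hsubder z hz)]
        have h1 : ‖(1 - v * (z l)) ^ c - ∑ i ∈ Finset.range N, cc i * (z l) ^ i‖
            ≤ ε / 2 := hNc (z l) (hz l).le
        have h2 : (1 - ‖z l‖ ^ 2) ^ p ≤ 1 := by
          apply Real.rpow_le_one _ _ hp.le
          · nlinarith [norm_nonneg (z l), (hz l)]
          · nlinarith [norm_nonneg (z l)]
        calc ‖_‖ * (1 - ‖z l‖ ^ 2) ^ p ≤ (ε/2) * 1 := by
              apply mul_le_mul h1 h2 (Real.rpow_nonneg (by nlinarith [norm_nonneg (z l), hz l]) p) (by linarith)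
          _ = ε / 2 := mul_one _
      unfold blochNorm
      have h0 : ‖(fun z : Fin n → ℂ => F (z l) - Q (z l)) 0‖ = 0 := by
        have hQ0 : Q 0 = 0 := by
          rw [hQdef]
          apply Finset.sum_eq_zero
          intro i _
          rw [zero_pow (Nat.succ_ne_zero i), mul_zero]
        simp only [Pi.zero_apply, hF0, hQ0, sub_zero, norm_zero]
      rw [h0, zero_add]
      calc sSup (blochSum n p (fun z : Fin n → ℂ => F (z l) - Q (z l)) '' polydisc n)
          ≤ ε / 2 := by
            apply Real.sSup_le _ (by linarith)
            rintro y ⟨z, hz, rfl⟩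
            exact hbs z hz
        _ < ε := by linarith
end
end

section
/- Let p, q > 0 and let φ = (φ_1,…,φ_n) be a holomorphic self-map of U^n. Then C_φ maps the little p-Bloch space B^p_0(U^n) boundedly into the little q-Bloch space B^q_0(U^n) if and only if φ^γ = φ_1^{γ_1}···φ_n^{γ_n} belongs to B^q_0(U^n) for every multi-index γ ∈ ℕ^n, and there exists a constant C such that Σ_{k,l=1}^n |∂φ_l/∂z_k(z)| · (1−|z_k|²)^q/(1−|φ_l(z)|²)^p ≤ C for all z ∈ U^n. -/
open Metric Set Filter
noncomputable section

lemma zero_mem_polydisc (n : ℕ) : (0 : Fin n → ℂ) ∈ polydisc n := by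
  intro j; simp

lemma polydisc_nonempty (n : ℕ) : (polydisc n).Nonempty := ⟨0, zero_mem_polydisc n⟩

lemma polydisc_subset_closedBall (n : ℕ) : polydisc n ⊆ Metric.closedBall (0 : Fin n → ℂ) 1 := by
  intro z hz
  rw [Metric.mem_closedBall, dist_zero_right, pi_norm_le_iff_of_nonneg (by norm_num)]
  intro j; exact (le_of_lt (hz j))

lemma one_sub_sq_pos {n : ℕ} {z : Fin n → ℂ} (hz : z ∈ polydisc n) (k : Fin n) :
    0 < 1 - ‖z k‖ ^ 2 := by
  have h := hz k
  nlinarith [norm_nonneg (z k)]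

lemma one_sub_sq_le_one {n : ℕ} (z : Fin n → ℂ) (k : Fin n) :
    1 - ‖z k‖ ^ 2 ≤ 1 := by nlinarith [norm_nonneg (z k), sq_nonneg (‖z k‖)]

lemma rpow_factor_le_one {n : ℕ} {p : ℝ} (hp : 0 < p) {z : Fin n → ℂ} (hz : z ∈ polydisc n)
    (k : Fin n) : (1 - ‖z k‖ ^ 2) ^ p ≤ 1 :=
  Real.rpow_le_one (le_of_lt (one_sub_sq_pos hz k)) (one_sub_sq_le_one z k) hp.le

lemma blochSum_nonneg {n : ℕ} (p : ℝ) (f : (Fin n → ℂ) → ℂ) {z : Fin n → ℂ}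
    (hz : z ∈ polydisc n) : 0 ≤ blochSum n p f z :=
  Finset.sum_nonneg fun k _ => mul_nonneg (norm_nonneg _)
    (Real.rpow_nonneg (one_sub_sq_pos hz k).le p)


-- sSup helpers
lemma blochSum_le_sSup {n : ℕ} {p : ℝ} {f : (Fin n → ℂ) → ℂ}
    (hB : BddAbove (blochSum n p f '' polydisc n)) {z : Fin n → ℂ} (hz : z ∈ polydisc n) :
    blochSum n p f z ≤ sSup (blochSum n p f '' polydisc n) :=
  le_csSup hB ⟨z, hz, rfl⟩

lemma sSup_blochSum_nonneg {n : ℕ} {p : ℝ} {f : (Fin n → ℂ) → ℂ}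
    (hB : BddAbove (blochSum n p f '' polydisc n)) :
    0 ≤ sSup (blochSum n p f '' polydisc n) :=
  le_trans (blochSum_nonneg p f (zero_mem_polydisc n)) (blochSum_le_sSup hB (zero_mem_polydisc n))

lemma sSup_blochSum_le {n : ℕ} {p : ℝ} {f : (Fin n → ℂ) → ℂ} {M : ℝ}
    (h : ∀ z ∈ polydisc n, blochSum n p f z ≤ M) :
    sSup (blochSum n p f '' polydisc n) ≤ M := by
  apply csSup_le ((polydisc_nonempty n).image _)
  rintro b ⟨z, hz, rfl⟩; exact h z hz

lemma blochNorm_nonneg {n : ℕ} {p : ℝ} {f : (Fin n → ℂ) → ℂ}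
    (hB : BddAbove (blochSum n p f '' polydisc n)) : 0 ≤ blochNorm n p f :=
  add_nonneg (norm_nonneg _) (sSup_blochSum_nonneg hB)

lemma blochSum_le_blochNorm {n : ℕ} {p : ℝ} {f : (Fin n → ℂ) → ℂ}
    (hB : BddAbove (blochSum n p f '' polydisc n)) {z : Fin n → ℂ} (hz : z ∈ polydisc n) :
    blochSum n p f z ≤ blochNorm n p f :=
  le_trans (blochSum_le_sSup hB hz) (le_add_of_nonneg_left (norm_nonneg _))

lemma abs_apply_zero_le_blochNorm {n : ℕ} {p : ℝ} {f : (Fin n → ℂ) → ℂ}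
    (hB : BddAbove (blochSum n p f '' polydisc n)) :
    ‖f 0‖ ≤ blochNorm n p f :=
  le_add_of_nonneg_right (sSup_blochSum_nonneg hB)

lemma diffAt_of_memPolydisc {n : ℕ} {E : Type*} [NormedAddCommGroup E] [NormedSpace ℂ E]
    {f : (Fin n → ℂ) → E} (hf : DifferentiableOn ℂ f (polydisc n)) {z : Fin n → ℂ}
    (hz : z ∈ polydisc n) : DifferentiableAt ℂ f z :=
  hf.differentiableAt ((isOpen_polydisc n).mem_nhds hz)

-- pointwise subadditivity
lemma blochSum_add_le {n : ℕ} {p : ℝ} {f g : (Fin n → ℂ) → ℂ}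
    (hf : DifferentiableOn ℂ f (polydisc n)) (hg : DifferentiableOn ℂ g (polydisc n))
    {z : Fin n → ℂ} (hz : z ∈ polydisc n) :
    blochSum n p (fun z => f z + g z) z ≤ blochSum n p f z + blochSum n p g z := by
  simp only [blochSum, ← Finset.sum_add_distrib]
  apply Finset.sum_le_sum
  intro k _
  rw [fderiv_fun_add (diffAt_of_memPolydisc hf hz) (diffAt_of_memPolydisc hg hz)]
  have : 0 ≤ (1 - ‖z k‖ ^ 2) ^ p := Real.rpow_nonneg (one_sub_sq_pos hz k).le p
  rw [← add_mul]
  apply mul_le_mul_of_nonneg_right _ this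
  exact norm_add_le _ _

lemma blochSum_sub_le {n : ℕ} {p : ℝ} {f g : (Fin n → ℂ) → ℂ}
    (hf : DifferentiableOn ℂ f (polydisc n)) (hg : DifferentiableOn ℂ g (polydisc n))
    {z : Fin n → ℂ} (hz : z ∈ polydisc n) :
    blochSum n p (fun z => f z - g z) z ≤ blochSum n p f z + blochSum n p g z := by
  simp only [blochSum, ← Finset.sum_add_distrib]
  apply Finset.sum_le_sum
  intro k _
  rw [fderiv_fun_sub (diffAt_of_memPolydisc hf hz) (diffAt_of_memPolydisc hg hz)]
  have : 0 ≤ (1 - ‖z k‖ ^ 2) ^ p := Real.rpow_nonneg (one_sub_sq_pos hz k).le p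
  rw [← add_mul]
  apply mul_le_mul_of_nonneg_right _ this
  have := norm_add_le ((fderiv ℂ f z) (Pi.single k 1)) (-((fderiv ℂ g z) (Pi.single k 1)))
  simpa [sub_eq_add_neg] using this

lemma blochSum_smul {n : ℕ} {p : ℝ} {f : (Fin n → ℂ) → ℂ} (c : ℂ)
    (hf : DifferentiableOn ℂ f (polydisc n)) {z : Fin n → ℂ} (hz : z ∈ polydisc n) :
    blochSum n p (fun z => c * f z) z = ‖c‖ * blochSum n p f z := by
  rw [blochSum, blochSum, Finset.mul_sum]
  apply Finset.sum_congr rfl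
  intro k _
  rw [fderiv_const_mul (diffAt_of_memPolydisc hf hz) c]
  simp [map_mul, mul_assoc]

-- MemBloch closure
lemma MemBloch.add {n : ℕ} {p : ℝ} {f g : (Fin n → ℂ) → ℂ}
    (hf : MemBloch n p f) (hg : MemBloch n p g) : MemBloch n p (fun z => f z + g z) := by
  obtain ⟨Mf, hMf⟩ := hf.2
  obtain ⟨Mg, hMg⟩ := hg.2
  refine ⟨hf.1.add hg.1, ⟨Mf + Mg, ?_⟩⟩
  rintro b ⟨z, hz, rfl⟩
  refine le_trans (blochSum_add_le hf.1 hg.1 hz) (add_le_add ?_ ?_)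
  · exact hMf ⟨z, hz, rfl⟩
  · exact hMg ⟨z, hz, rfl⟩

lemma MemBloch.sub {n : ℕ} {p : ℝ} {f g : (Fin n → ℂ) → ℂ}
    (hf : MemBloch n p f) (hg : MemBloch n p g) : MemBloch n p (fun z => f z - g z) := by
  obtain ⟨Mf, hMf⟩ := hf.2
  obtain ⟨Mg, hMg⟩ := hg.2
  refine ⟨hf.1.sub hg.1, ⟨Mf + Mg, ?_⟩⟩
  rintro b ⟨z, hz, rfl⟩
  refine le_trans (blochSum_sub_le hf.1 hg.1 hz) (add_le_add ?_ ?_)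
  · exact hMf ⟨z, hz, rfl⟩
  · exact hMg ⟨z, hz, rfl⟩

lemma MemBloch.smul {n : ℕ} {p : ℝ} {f : (Fin n → ℂ) → ℂ} (c : ℂ)
    (hf : MemBloch n p f) : MemBloch n p (fun z => c * f z) := by
  obtain ⟨Mf, hMf⟩ := hf.2
  refine ⟨(differentiable_const c).differentiableOn.mul hf.1, ⟨‖c‖ * Mf, ?_⟩⟩
  rintro b ⟨z, hz, rfl⟩
  rw [blochSum_smul c hf.1 hz]
  have h0 : blochSum n p f z ≤ Mf := hMf ⟨z, hz, rfl⟩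
  exact mul_le_mul_of_nonneg_left h0 (norm_nonneg c)

-- blochNorm triangle inequality (needs MemBloch on both)
lemma blochNorm_add_le {n : ℕ} {p : ℝ} {f g : (Fin n → ℂ) → ℂ}
    (hf : MemBloch n p f) (hg : MemBloch n p g) :
    blochNorm n p (fun z => f z + g z) ≤ blochNorm n p f + blochNorm n p g := by
  rw [blochNorm, blochNorm, blochNorm]
  have h1 : ‖f 0 + g 0‖ ≤ ‖f 0‖ + ‖g 0‖ :=
    norm_add_le _ _
  have h2 : sSup (blochSum n p (fun z => f z + g z) '' polydisc n) ≤
      sSup (blochSum n p f '' polydisc n) + sSup (blochSum n p g '' polydisc n) := by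
    apply sSup_blochSum_le
    intro z hz
    exact le_trans (blochSum_add_le hf.1 hg.1 hz)
      (add_le_add (blochSum_le_sSup hf.2 hz) (blochSum_le_sSup hg.2 hz))
  calc ‖f 0 + g 0‖ + sSup (blochSum n p (fun z => f z + g z) '' polydisc n)
      ≤ (‖f 0‖ + ‖g 0‖) + (sSup (blochSum n p f '' polydisc n) + sSup (blochSum n p g '' polydisc n)) := add_le_add h1 h2
    _ = _ := by ring

-- polynomial functions are smooth
lemma contDiff_eval_poly {n : ℕ} (P : MvPolynomial (Fin n) ℂ) :
    ContDiff ℂ ⊤ (fun z : Fin n → ℂ => MvPolynomial.eval z P) := by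
  induction P using MvPolynomial.induction_on with
  | C a => simpa using contDiff_const
  | add P Q hP hQ => simpa using hP.add hQ
  | mul_X P i hP =>
      have hproj : ContDiff ℂ ⊤ (fun z : Fin n → ℂ => z i) :=
        (ContinuousLinearMap.proj (R := ℂ) (φ := fun _ : Fin n => ℂ) i).contDiff
      simpa using hP.mul hproj

lemma IsPolyFn.contDiff {n : ℕ} {g : (Fin n → ℂ) → ℂ} (hg : IsPolyFn n g) :
    ContDiff ℂ ⊤ g := by
  obtain ⟨P, hP⟩ := hg
  have : g = fun z => MvPolynomial.eval z P := funext hP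
  rw [this]; exact contDiff_eval_poly P

lemma IsPolyFn.differentiable {n : ℕ} {g : (Fin n → ℂ) → ℂ} (hg : IsPolyFn n g) :
    Differentiable ℂ g := hg.contDiff.differentiable (by norm_num)

-- entire functions with continuous fderiv are Bloch, with explicit control
lemma memBloch_of_contDiff {n : ℕ} {p : ℝ} (hp : 0 < p) {g : (Fin n → ℂ) → ℂ}
    (hg : ContDiff ℂ ⊤ g) : MemBloch n p g := by
  refine ⟨hg.differentiable (by norm_num) |>.differentiableOn, ?_⟩
  have hcont : Continuous (fderiv ℂ g) := hg.continuous_fderiv (by norm_num)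
  obtain ⟨M, hM⟩ := (isCompact_closedBall (0 : Fin n → ℂ) 1).exists_bound_of_continuousOn
    hcont.continuousOn
  refine ⟨(n : ℝ) * M, ?_⟩
  rintro b ⟨z, hz, rfl⟩
  have hM0 : 0 ≤ M := le_trans (norm_nonneg _) (hM 0 (Metric.mem_closedBall_self (by norm_num)))
  have hzM := hM z (polydisc_subset_closedBall n hz)
  calc blochSum n p g z ≤ ∑ _k : Fin n, M := by
        apply Finset.sum_le_sum
        intro k _
        have h1 : ‖(fderiv ℂ g z) (Pi.single k 1)‖ ≤ M := by
          have := (fderiv ℂ g z).le_opNorm (Pi.single k 1)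
          have hs : ‖(Pi.single k 1 : Fin n → ℂ)‖ ≤ 1 := by
            rw [pi_norm_le_iff_of_nonneg (by norm_num)]
            intro j
            by_cases h : j = k
            · subst h; simp
            · simp [Pi.single_apply, h]
          calc ‖(fderiv ℂ g z) (Pi.single k 1)‖ = ‖(fderiv ℂ g z) (Pi.single k 1)‖ := rfl
            _ ≤ ‖fderiv ℂ g z‖ * ‖(Pi.single k 1 : Fin n → ℂ)‖ := this
            _ ≤ M * 1 := mul_le_mul hzM hs (norm_nonneg _) hM0
            _ = M := mul_one M
        calc ‖(fderiv ℂ g z) (Pi.single k 1)‖ * (1 - ‖z k‖ ^ 2) ^ p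
            ≤ M * 1 := mul_le_mul h1 (rpow_factor_le_one hp hz k)
              (Real.rpow_nonneg (one_sub_sq_pos hz k).le p) hM0
          _ = M := mul_one M
    _ = (n : ℝ) * M := by simp [Finset.sum_const, nsmul_eq_mul]

lemma blochNorm_zero_fun {n : ℕ} (p : ℝ) : blochNorm n p (fun _ => (0:ℂ)) = 0 := by
  rw [blochNorm]
  have h1 : (blochSum n p (fun _ => (0:ℂ)) '' polydisc n) = {0} := by
    apply Subset.antisymm
    · rintro b ⟨z, hz, rfl⟩
      simp [blochSum, fderiv_const]
    · rintro b hb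
      rw [Set.mem_singleton_iff] at hb
      subst hb
      exact ⟨0, zero_mem_polydisc n, by simp [blochSum, fderiv_const]⟩
  rw [h1]
  simp

lemma IsPolyFn.memLittleBloch {n : ℕ} {p : ℝ} (hp : 0 < p) {g : (Fin n → ℂ) → ℂ}
    (hg : IsPolyFn n g) : MemLittleBloch n p g := by
  refine ⟨memBloch_of_contDiff hp hg.contDiff, ?_⟩
  intro ε hε
  refine ⟨g, hg, ?_⟩
  have : (fun z => g z - g z) = fun _ => (0:ℂ) := by funext z; simp
  rw [this, blochNorm_zero_fun]
  exact hε

lemma IsPolyFn.memBloch {n : ℕ} {p : ℝ} (hp : 0 < p) {g : (Fin n → ℂ) → ℂ}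
    (hg : IsPolyFn n g) : MemBloch n p g := memBloch_of_contDiff hp hg.contDiff

lemma IsPolyFn.add {n : ℕ} {g h : (Fin n → ℂ) → ℂ} (hg : IsPolyFn n g) (hh : IsPolyFn n h) :
    IsPolyFn n (fun z => g z + h z) := by
  obtain ⟨P, hP⟩ := hg; obtain ⟨Q, hQ⟩ := hh
  exact ⟨P + Q, fun z => by simp [hP z, hQ z]⟩

lemma IsPolyFn.smul {n : ℕ} (c : ℂ) {g : (Fin n → ℂ) → ℂ} (hg : IsPolyFn n g) :
    IsPolyFn n (fun z => c * g z) := by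
  obtain ⟨P, hP⟩ := hg
  exact ⟨MvPolynomial.C c * P, fun z => by simp [hP z]⟩

lemma MemLittleBloch.add {n : ℕ} {p : ℝ} (hp : 0 < p) {f g : (Fin n → ℂ) → ℂ}
    (hf : MemLittleBloch n p f) (hg : MemLittleBloch n p g) :
    MemLittleBloch n p (fun z => f z + g z) := by
  refine ⟨hf.1.add hg.1, ?_⟩
  intro ε hε
  obtain ⟨u, hu, hu2⟩ := hf.2 (ε/2) (by linarith)
  obtain ⟨v, hv, hv2⟩ := hg.2 (ε/2) (by linarith)
  refine ⟨fun z => u z + v z, hu.add hv, ?_⟩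
  have heq : (fun z => (f z + g z) - (u z + v z)) =
      (fun z => (f z - u z) + (g z - v z)) := by funext z; ring
  rw [heq]
  have h1 : MemBloch n p (fun z => f z - u z) := hf.1.sub (hu.memBloch hp)
  have h2 : MemBloch n p (fun z => g z - v z) := hg.1.sub (hv.memBloch hp)
  calc blochNorm n p (fun z => (f z - u z) + (g z - v z))
      ≤ blochNorm n p (fun z => f z - u z) + blochNorm n p (fun z => g z - v z) :=
        blochNorm_add_le h1 h2
    _ < ε/2 + ε/2 := add_lt_add hu2 hv2
    _ = ε := by ring

lemma MemLittleBloch.smul {n : ℕ} {p : ℝ} (hp : 0 < p) (c : ℂ) {f : (Fin n → ℂ) → ℂ}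
    (hf : MemLittleBloch n p f) : MemLittleBloch n p (fun z => c * f z) := by
  refine ⟨hf.1.smul c, ?_⟩
  intro ε hε
  have hc1 : (0:ℝ) < ‖c‖ + 1 := by positivity
  obtain ⟨u, hu, hu2⟩ := hf.2 (ε/(‖c‖ + 1)) (by positivity)
  refine ⟨fun z => c * u z, hu.smul c, ?_⟩
  have heq : (fun z => (c * f z) - (c * u z)) = (fun z => c * (f z - u z)) := by funext z; ring
  rw [heq]
  have h1 : MemBloch n p (fun z => f z - u z) := hf.1.sub (hu.memBloch hp)
  have hbn : blochNorm n p (fun z => c * (f z - u z)) ≤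
      ‖c‖ * blochNorm n p (fun z => f z - u z) := by
    rw [blochNorm, blochNorm, mul_add]
    apply add_le_add
    · apply le_of_eq; simp [map_mul]
    · apply sSup_blochSum_le
      intro z hz
      rw [blochSum_smul c h1.1 hz]
      exact mul_le_mul_of_nonneg_left (blochSum_le_sSup h1.2 hz) (norm_nonneg c)
  have hnn : 0 ≤ blochNorm n p (fun z => f z - u z) := blochNorm_nonneg h1.2
  calc blochNorm n p (fun z => c * (f z - u z))
      ≤ ‖c‖ * blochNorm n p (fun z => f z - u z) := hbn
    _ ≤ (‖c‖ + 1) * blochNorm n p (fun z => f z - u z) := by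
        apply mul_le_mul_of_nonneg_right _ hnn; linarith
    _ < (‖c‖ + 1) * (ε/(‖c‖ + 1)) := by
        apply mul_lt_mul_of_pos_left hu2 hc1
    _ = ε := by field_simp

lemma MemLittleBloch.finsetSum {n : ℕ} {p : ℝ} (hp : 0 < p) {ι : Type*} (s : Finset ι)
    (F : ι → (Fin n → ℂ) → ℂ) (hF : ∀ i ∈ s, MemLittleBloch n p (F i)) :
    MemLittleBloch n p (fun z => ∑ i ∈ s, F i z) := by
  classical
  induction s using Finset.induction_on with
  | empty =>
      simpa using (IsPolyFn.memLittleBloch hp (g := fun _ => (0:ℂ)) ⟨0, fun z => by simp⟩)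
  | insert _ _ hx ih =>
      rename_i a t
      have h1 : MemLittleBloch n p (F a) := hF a (Finset.mem_insert_self a t)
      have h2 := ih (fun i hi => hF i (Finset.mem_insert_of_mem hi))
      have heq : (fun z => ∑ i ∈ insert a t, F i z) =
          (fun z => F a z + ∑ i ∈ t, F i z) := by
        funext z; rw [Finset.sum_insert hx]
      rw [heq]
      exact h1.add hp h2

lemma clm_apply_eq_sum {n : ℕ} (L : (Fin n → ℂ) →L[ℂ] ℂ) (v : Fin n → ℂ) :
    L v = ∑ k : Fin n, v k * L (Pi.single k 1) := by
  conv_lhs => rw [← Finset.univ_sum_single v]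
  rw [map_sum]
  apply Finset.sum_congr rfl
  intro k _
  have h1 : Pi.single k (v k) = v k • (Pi.single k (1:ℂ) : Fin n → ℂ) := by
    rw [← Pi.single_smul]
    simp
  rw [h1, map_smul, smul_eq_mul]

lemma fderiv_comp_single {n : ℕ} {φ : (Fin n → ℂ) → Fin n → ℂ} (hφ : HoloSelfMap n φ)
    {f : (Fin n → ℂ) → ℂ} {z : Fin n → ℂ} (hz : z ∈ polydisc n)
    (hf : DifferentiableAt ℂ f (φ z)) (k : Fin n) :
    fderiv ℂ (fun z => f (φ z)) z (Pi.single k 1) =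
      ∑ l : Fin n, fderiv ℂ φ z (Pi.single k 1) l * fderiv ℂ f (φ z) (Pi.single l 1) := by
  have hφz : DifferentiableAt ℂ φ z := diffAt_of_memPolydisc hφ.1 hz
  have hcomp : fderiv ℂ (fun z => f (φ z)) z = (fderiv ℂ f (φ z)).comp (fderiv ℂ φ z) :=
    fderiv_comp z hf hφz
  rw [hcomp, ContinuousLinearMap.comp_apply]
  exact clm_apply_eq_sum (fderiv ℂ f (φ z)) (fderiv ℂ φ z (Pi.single k 1))

lemma mono_hasFDerivAt {n : ℕ} (l : Fin n) (m : ℕ) (w : Fin n → ℂ) :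
    HasFDerivAt (fun z : Fin n → ℂ => z l ^ m)
      (((m : ℂ) * w l ^ (m - 1)) • ContinuousLinearMap.proj (R := ℂ) (φ := fun _ : Fin n => ℂ) l) w := by
  have h1 : HasDerivAt (fun x : ℂ => x ^ m) ((m : ℂ) * w l ^ (m - 1)) (w l) :=
    hasDerivAt_pow m (w l)
  have h2 : HasFDerivAt (fun z : Fin n → ℂ => z l)
      (ContinuousLinearMap.proj (R := ℂ) (φ := fun _ : Fin n => ℂ) l) w :=
    (ContinuousLinearMap.proj (R := ℂ) (φ := fun _ : Fin n => ℂ) l).hasFDerivAt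
  exact h1.comp_hasFDerivAt w h2

lemma fderiv_mono_single {n : ℕ} (l : Fin n) (m : ℕ) (w : Fin n → ℂ) (j : Fin n) :
    fderiv ℂ (fun z : Fin n → ℂ => z l ^ m) w (Pi.single j 1) =
      if j = l then (m : ℂ) * w l ^ (m - 1) else 0 := by
  rw [(mono_hasFDerivAt l m w).fderiv]
  simp only [ContinuousLinearMap.coe_smul', Pi.smul_apply, ContinuousLinearMap.proj_apply,
    smul_eq_mul]
  by_cases h : j = l
  · subst h; simp
  · simp [Pi.single_apply, h]

lemma growth_lemma {n : ℕ} {p : ℝ} (hp : 0 < p) {f : (Fin n → ℂ) → ℂ}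
    (hf : MemBloch n p f) {w : Fin n → ℂ} (hw : w ∈ polydisc n) :
    ‖f w‖ ≤
      (1 + ∑ k : Fin n, ((1 - ‖w k‖ ^ 2) ^ p)⁻¹) * blochNorm n p f := by
  set S := sSup (blochSum n p f '' polydisc n) with hS
  set K := ∑ k : Fin n, ((1 - ‖w k‖ ^ 2) ^ p)⁻¹ with hKdef
  have hS0 : 0 ≤ S := sSup_blochSum_nonneg hf.2
  have hK0 : 0 ≤ K := Finset.sum_nonneg fun k _ =>
    inv_nonneg.mpr (Real.rpow_nonneg (one_sub_sq_pos hw k).le p)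
  have hseg : ∀ x ∈ segment ℝ (0 : Fin n → ℂ) w, x ∈ polydisc n ∧
      ∀ k, ‖x k‖ ≤ ‖w k‖ := by
    intro x hx
    rw [segment_eq_image] at hx
    obtain ⟨b, hb, rfl⟩ := hx
    have habs : ∀ k, ‖((1 - b) • (0 : Fin n → ℂ) + b • w) k‖ =
        b * ‖w k‖ := by
      intro k
      simp only [Pi.add_apply, Pi.smul_apply, Pi.zero_apply, smul_zero, zero_add]
      rw [show ‖b • w k‖ = ‖b • w k‖ from rfl, norm_smul]
      simp [abs_of_nonneg hb.1, Real.norm_eq_abs]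
    constructor
    · intro k
      rw [Set.mem_Icc] at hb
      have := hw k
      have h0 := norm_nonneg (w k)
      calc ‖((1 - b) • (0 : Fin n → ℂ) + b • w) k‖ = b * ‖w k‖ := habs k
        _ < 1 := by nlinarith
    · intro k
      rw [Set.mem_Icc] at hb
      have h0 := norm_nonneg (w k)
      calc ‖((1 - b) • (0 : Fin n → ℂ) + b • w) k‖ = b * ‖w k‖ := habs k
        _ ≤ ‖w k‖ := by nlinarith
  have hbound : ∀ x ∈ segment ℝ (0 : Fin n → ℂ) w, ‖fderiv ℂ f x‖ ≤ S * K := by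
    intro x hx
    obtain ⟨hxp, hxle⟩ := hseg x hx
    apply ContinuousLinearMap.opNorm_le_bound _ (mul_nonneg hS0 hK0)
    intro v
    rw [clm_apply_eq_sum]
    have hterm : ∀ k : Fin n, ‖fderiv ℂ f x (Pi.single k 1)‖ ≤
        S * ((1 - ‖w k‖ ^ 2) ^ p)⁻¹ := by
      intro k
      have h1 : ‖fderiv ℂ f x (Pi.single k 1)‖ * (1 - ‖x k‖ ^ 2) ^ p ≤ S := by
        refine le_trans ?_ (blochSum_le_sSup hf.2 hxp)
        rw [blochSum]
        apply Finset.single_le_sum (f := fun k =>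
          ‖fderiv ℂ f x (Pi.single k 1)‖ * (1 - ‖x k‖ ^ 2) ^ p)
          (fun j _ => mul_nonneg (norm_nonneg _)
            (Real.rpow_nonneg (one_sub_sq_pos hxp j).le p)) (Finset.mem_univ k)
      have h2 : (1 - ‖w k‖ ^ 2) ^ p ≤ (1 - ‖x k‖ ^ 2) ^ p := by
        apply Real.rpow_le_rpow (one_sub_sq_pos hw k).le _ hp.le
        have := hxle k
        nlinarith [norm_nonneg (x k), norm_nonneg (w k)]
      have h3 : 0 < (1 - ‖w k‖ ^ 2) ^ p := Real.rpow_pos_of_pos (one_sub_sq_pos hw k) p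
      have ht : 0 < (1 - ‖x k‖ ^ 2) ^ p := Real.rpow_pos_of_pos (one_sub_sq_pos hxp k) p
      have hA : ‖fderiv ℂ f x (Pi.single k 1)‖ ≤
          S / (1 - ‖x k‖ ^ 2) ^ p := (le_div_iff₀ ht).mpr h1
      calc ‖fderiv ℂ f x (Pi.single k 1)‖
          ≤ S / (1 - ‖x k‖ ^ 2) ^ p := hA
        _ ≤ S / (1 - ‖w k‖ ^ 2) ^ p := by gcongr
        _ = S * ((1 - ‖w k‖ ^ 2) ^ p)⁻¹ := div_eq_mul_inv _ _
    calc ‖∑ k : Fin n, v k * fderiv ℂ f x (Pi.single k 1)‖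
        ≤ ∑ k : Fin n, ‖v k * fderiv ℂ f x (Pi.single k 1)‖ := norm_sum_le _ _
      _ ≤ ∑ k : Fin n, ‖v‖ * (S * ((1 - ‖w k‖ ^ 2) ^ p)⁻¹) := by
          apply Finset.sum_le_sum
          intro k _
          rw [norm_mul]
          exact mul_le_mul (norm_le_pi_norm v k) (hterm k) (norm_nonneg _) (norm_nonneg _)
      _ = S * K * ‖v‖ := by rw [← Finset.mul_sum, ← Finset.mul_sum]; ring
  have key := (convex_segment (0 : Fin n → ℂ) w).norm_image_sub_le_of_norm_hasFDerivWithin_le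
      (f := f) (f' := fun x => fderiv ℂ f x)
      (fun x hx => (diffAt_of_memPolydisc hf.1 (hseg x hx).1).hasFDerivAt.hasFDerivWithinAt)
      hbound (left_mem_segment ℝ (0 : Fin n → ℂ) w) (right_mem_segment ℝ (0 : Fin n → ℂ) w)
  have hwn : ‖w - 0‖ ≤ 1 := by
    rw [sub_zero]
    have := polydisc_subset_closedBall n hw
    rwa [Metric.mem_closedBall, dist_zero_right] at this
  have h5 : ‖f w‖ ≤ ‖f 0‖ + S * K := by
    have hz1 : ‖f w‖ - ‖f 0‖ ≤ ‖f w - f 0‖ := norm_sub_norm_le _ _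
    have h6 : ‖f w - f 0‖ ≤ S * K * 1 :=
      le_trans key (mul_le_mul_of_nonneg_left hwn (mul_nonneg hS0 hK0))
    have : ‖f w‖ ≤ ‖f 0‖ + S * K := by linarith
    simpa using this
  rw [blochNorm, ← hS]
  nlinarith [norm_nonneg (f 0)]

-- elementary real inequalities
lemma rpow_exp_bound {p : ℝ} (hp : 0 < p) {u : ℝ} (hu : 0 ≤ u) :
    u ^ p * Real.exp (-(u/2)) ≤ (2*p) ^ p * Real.exp (-p) := by
  rcases eq_or_lt_of_le hu with h | h
  · rw [← h, Real.zero_rpow hp.ne', zero_mul]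
    positivity
  · have h2p : (0:ℝ) < 2*p := by linarith
    have hlog := Real.log_le_sub_one_of_pos (x := u/(2*p)) (by positivity)
    rw [Real.log_div h.ne' h2p.ne'] at hlog
    have hkey : Real.log u * p - u/2 ≤ Real.log (2*p) * p - p := by
      have : Real.log u ≤ Real.log (2*p) + u/(2*p) - 1 := by linarith
      have h3 : Real.log u * p ≤ (Real.log (2*p) + u/(2*p) - 1) * p :=
        mul_le_mul_of_nonneg_right this hp.le
      have h4 : (u/(2*p)) * p = u/2 := by field_simp
      nlinarith
    calc u ^ p * Real.exp (-(u/2)) = Real.exp (Real.log u * p) * Real.exp (-(u/2)) := by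
          rw [Real.rpow_def_of_pos h]
      _ = Real.exp (Real.log u * p - u/2) := by rw [← Real.exp_add]; ring_nf
      _ ≤ Real.exp (Real.log (2*p) * p - p) := Real.exp_le_exp.mpr hkey
      _ = Real.exp (Real.log (2*p) * p) * Real.exp (-p) := by rw [← Real.exp_add]; ring_nf
      _ = (2*p) ^ p * Real.exp (-p) := by rw [← Real.rpow_def_of_pos h2p]

lemma pow_le_exp_bound {t : ℝ} (ht0 : 0 ≤ t) (ht1 : t ≤ 1) (j : ℕ) :
    t ^ j ≤ Real.exp (-((1-t) * j)) := by
  have h1 : t ≤ Real.exp (-(1-t)) := by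
    have := Real.add_one_le_exp (t - 1)
    calc t = (t - 1) + 1 := by ring
      _ ≤ Real.exp (t-1) := this
      _ = Real.exp (-(1-t)) := by ring_nf
  calc t ^ j ≤ (Real.exp (-(1-t))) ^ j := pow_le_pow_left₀ ht0 h1 j
    _ = Real.exp (-((1-t) * j)) := by
        rw [← Real.exp_nat_mul]; ring_nf

def Bconst (p : ℝ) : ℝ := 2 ^ p * ((2*p) ^ p * Real.exp (-p) + 1)

lemma Bconst_pos {p : ℝ} (hp : 0 < p) : 0 < Bconst p := by
  unfold Bconst; positivity

-- upper bound: m * t^(m-1) * (1-t^2)^p ≤ Bconst p * m^(1-p)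
lemma mono_upper {p : ℝ} (hp : 0 < p) {m : ℕ} (hm : 1 ≤ m) {t : ℝ} (ht0 : 0 ≤ t) (ht1 : t < 1) :
    (m:ℝ) * t ^ (m-1) * (1 - t^2) ^ p ≤ Bconst p * (m:ℝ) ^ (1-p) := by
  have hm0 : (0:ℝ) < m := by exact_mod_cast hm
  have h1t : 0 < 1 - t := by linarith
  have h1t2 : 0 < 1 - t^2 := by nlinarith
  -- (1-t²)^p ≤ 2^p (1-t)^p
  have e1 : (1 - t^2) ^ p ≤ 2 ^ p * (1-t) ^ p := by
    rw [← Real.mul_rpow (by norm_num) h1t.le]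
    apply Real.rpow_le_rpow h1t2.le (by nlinarith) hp.le
  -- m^p * t^(m-1) * (1-t)^p ≤ (2p)^p e^{-p} + 1
  have e2 : (m:ℝ) ^ p * t ^ (m-1) * (1-t) ^ p ≤ (2*p) ^ p * Real.exp (-p) + 1 := by
    rcases Nat.lt_or_ge m 2 with h2 | h2
    · -- m = 1
      interval_cases m
      simp only [Nat.cast_one, Real.one_rpow, one_mul, Nat.sub_self, pow_zero, mul_one]
      have : (1-t) ^ p ≤ 1 := Real.rpow_le_one h1t.le (by linarith) hp.le
      have : (0:ℝ) ≤ (2*p) ^ p * Real.exp (-p) := by positivity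
      linarith
    · -- m ≥ 2
      set u := (m:ℝ) * (1-t) with hu
      have hu0 : 0 ≤ u := by positivity
      have e3 : (m:ℝ) ^ p * (1-t) ^ p = u ^ p := (Real.mul_rpow hm0.le h1t.le).symm
      have e4 : t ^ (m-1) ≤ Real.exp (-(u/2)) := by
        have hc : ((m-1 : ℕ):ℝ) = (m:ℝ) - 1 := by
          rw [Nat.cast_sub hm]; norm_num
        calc t ^ (m-1) ≤ Real.exp (-((1-t) * ((m-1:ℕ):ℝ))) := pow_le_exp_bound ht0 ht1.le (m-1)
          _ ≤ Real.exp (-(u/2)) := by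
              apply Real.exp_le_exp.mpr
              rw [hc, hu]
              have h2' : (2:ℝ) ≤ m := by exact_mod_cast h2
              nlinarith [mul_nonneg h1t.le (show (0:ℝ) ≤ (m:ℝ) - 2 by linarith)]
      calc (m:ℝ) ^ p * t ^ (m-1) * (1-t) ^ p = u ^ p * t ^ (m-1) := by rw [← e3]; ring
        _ ≤ u ^ p * Real.exp (-(u/2)) := by
            apply mul_le_mul_of_nonneg_left e4 (Real.rpow_nonneg hu0 p)
        _ ≤ (2*p) ^ p * Real.exp (-p) := rpow_exp_bound hp hu0
        _ ≤ (2*p) ^ p * Real.exp (-p) + 1 := by linarith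
  -- combine
  have hsplit : (m:ℝ) = (m:ℝ) ^ (1-p) * (m:ℝ) ^ p := by
    rw [← Real.rpow_add hm0]; norm_num
  calc (m:ℝ) * t ^ (m-1) * (1 - t^2) ^ p
      ≤ (m:ℝ) * t ^ (m-1) * (2 ^ p * (1-t) ^ p) := by
        apply mul_le_mul_of_nonneg_left e1
        positivity
    _ = 2 ^ p * ((m:ℝ) ^ (1-p) * ((m:ℝ) ^ p * t ^ (m-1) * (1-t) ^ p)) := by
        nth_rewrite 1 [hsplit]; ring
    _ ≤ 2 ^ p * ((m:ℝ) ^ (1-p) * ((2*p) ^ p * Real.exp (-p) + 1)) := by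
        apply mul_le_mul_of_nonneg_left _ (by positivity)
        apply mul_le_mul_of_nonneg_left e2 (Real.rpow_nonneg hm0.le _)
    _ = Bconst p * (m:ℝ) ^ (1-p) := by rw [Bconst]; ring

-- lower bound: ∃ m, c ≤ m^p * t^(m-1) * (1-t^2)^p
lemma mono_lower {p : ℝ} (hp : 0 < p) {t : ℝ} (ht0 : 0 ≤ t) (ht1 : t < 1) :
    ∃ m : ℕ, 1 ≤ m ∧ Real.exp (-2) * (3/4) ^ p ≤ (m:ℝ) ^ p * t ^ (m-1) * (1 - t^2) ^ p := by
  rcases le_or_gt t (1/2) with hhalf | hhalf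
  · refine ⟨1, le_refl 1, ?_⟩
    simp only [Nat.cast_one, Real.one_rpow, one_mul, Nat.sub_self, pow_zero]
    have h34 : (3/4 : ℝ) ≤ 1 - t^2 := by nlinarith
    have : (3/4 : ℝ) ^ p ≤ (1 - t^2) ^ p := Real.rpow_le_rpow (by norm_num) h34 hp.le
    have hexp : Real.exp (-2) ≤ 1 := Real.exp_le_one_iff.mpr (by norm_num)
    have h0 : (0:ℝ) ≤ (3/4:ℝ) ^ p := Real.rpow_nonneg (by norm_num) p
    nlinarith
  · have ht0' : (0:ℝ) < t := by linarith
    have h1t : (0:ℝ) < 1 - t := by linarith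
    set x := 1/(1-t) with hx
    have hx1 : (1:ℝ) ≤ x := by
      rw [hx]; rw [le_div_iff₀ h1t]; linarith
    refine ⟨⌈x⌉₊, ?_, ?_⟩
    · exact_mod_cast Nat.one_le_ceil_iff.mpr (by linarith)
    · set m := ⌈x⌉₊ with hm
      have hmx : x ≤ (m:ℝ) := Nat.le_ceil x
      have hm1 : (1:ℝ) ≤ m := le_trans hx1 hmx
      have hmlt : (m:ℝ) < x + 1 := Nat.ceil_lt_add_one (by linarith)
      have hm1' : 1 ≤ m := by exact_mod_cast hm1
      -- (m(1-t))^p ≥ 1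
      have e1 : (1:ℝ) ≤ (m:ℝ) ^ p * (1-t) ^ p := by
        rw [← Real.mul_rpow (by positivity) h1t.le]
        apply Real.one_le_rpow _ hp.le
        have hmx' : 1/(1-t) ≤ (m:ℝ) := by rw [← hx]; exact hmx
        rw [div_le_iff₀ h1t] at hmx'
        linarith
      -- t^(m-1) ≥ exp(-2)
      have e2 : Real.exp (-2) ≤ t ^ (m-1) := by
        have hc : ((m-1 : ℕ):ℝ) = (m:ℝ) - 1 := by
          rw [Nat.cast_sub hm1']; norm_num
        have hexple : (m:ℝ) - 1 ≤ x := by linarith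
        have step1 : t ^ (x:ℝ) ≤ t ^ (((m-1:ℕ)):ℝ) := by
          apply Real.rpow_le_rpow_of_exponent_ge ht0' ht1.le
          rw [hc]; exact hexple
        have step2 : Real.exp (-2) ≤ t ^ (x:ℝ) := by
          rw [Real.rpow_def_of_pos ht0']
          apply Real.exp_le_exp.mpr
          have hlogt : -(1-t)/t ≤ Real.log t := by
            have := Real.log_le_sub_one_of_pos (x := 1/t) (by positivity)
            rw [Real.log_div one_ne_zero ht0'.ne', Real.log_one] at this
            have h2 : -Real.log t ≤ 1/t - 1 := by linarith
            have : -(1/t - 1) ≤ Real.log t := by linarith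
            calc -(1-t)/t = -(1/t - 1) := by field_simp
              _ ≤ Real.log t := this
          have hxpos : (0:ℝ) < x := by positivity
          have ht2 : 1/t ≤ 2 := by
            rw [div_le_iff₀ ht0']; linarith
          calc (-2 : ℝ) ≤ -(1/t) := by linarith
            _ = (-(1-t)/t) * x := by
                rw [hx]; field_simp
            _ ≤ Real.log t * x := mul_le_mul_of_nonneg_right hlogt hxpos.le
        calc Real.exp (-2) ≤ t ^ (x:ℝ) := step2
          _ ≤ t ^ (((m-1:ℕ)):ℝ) := step1
          _ = t ^ (m-1) := Real.rpow_natCast t (m-1)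
      -- (1-t²)^p ≥ (1-t)^p
      have e3 : (1-t) ^ p ≤ (1 - t^2) ^ p :=
        Real.rpow_le_rpow h1t.le (by nlinarith) hp.le
      have h34le : ((3:ℝ)/4) ^ p ≤ 1 := Real.rpow_le_one (by norm_num) (by norm_num) hp.le
      have hpos1 : (0:ℝ) ≤ (m:ℝ) ^ p := Real.rpow_nonneg (by positivity) p
      have hpos2 : (0:ℝ) ≤ t ^ (m-1) := pow_nonneg ht0 (m-1)
      have hpos3 : (0:ℝ) ≤ (m:ℝ) ^ p * t ^ (m-1) := mul_nonneg hpos1 hpos2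
      calc Real.exp (-2) * (3/4) ^ p ≤ Real.exp (-2) * 1 :=
            mul_le_mul_of_nonneg_left h34le (Real.exp_nonneg _)
        _ = Real.exp (-2) := mul_one _
        _ ≤ ((m:ℝ) ^ p * (1-t) ^ p) * t ^ (m-1) := by
            nlinarith [mul_nonneg (show (0:ℝ) ≤ (m:ℝ) ^ p * (1-t) ^ p - 1 by linarith) hpos2]
        _ = ((m:ℝ) ^ p * t ^ (m-1)) * (1-t) ^ p := by ring
        _ ≤ ((m:ℝ) ^ p * t ^ (m-1)) * (1 - t^2) ^ p := mul_le_mul_of_nonneg_left e3 hpos3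
        _ = (m:ℝ) ^ p * t ^ (m-1) * (1 - t^2) ^ p := by ring
  

lemma deriv_le_of_memBloch {n : ℕ} {p : ℝ} {f : (Fin n → ℂ) → ℂ}
    (hf : MemBloch n p f) {x : Fin n → ℂ} (hx : x ∈ polydisc n) (k : Fin n) :
    ‖fderiv ℂ f x (Pi.single k 1)‖ ≤
      sSup (blochSum n p f '' polydisc n) / (1 - ‖x k‖ ^ 2) ^ p := by
  have h1 : ‖fderiv ℂ f x (Pi.single k 1)‖ * (1 - ‖x k‖ ^ 2) ^ p ≤
      sSup (blochSum n p f '' polydisc n) := by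
    refine le_trans ?_ (blochSum_le_sSup hf.2 hx)
    rw [blochSum]
    apply Finset.single_le_sum (f := fun k =>
      ‖fderiv ℂ f x (Pi.single k 1)‖ * (1 - ‖x k‖ ^ 2) ^ p)
      (fun j _ => mul_nonneg (norm_nonneg _)
        (Real.rpow_nonneg (one_sub_sq_pos hx j).le p)) (Finset.mem_univ k)
  exact (le_div_iff₀ (Real.rpow_pos_of_pos (one_sub_sq_pos hx k) p)).mpr h1

lemma blochSum_mono_eq {n : ℕ} {p : ℝ} (l : Fin n) (m : ℕ) (z : Fin n → ℂ) :
    blochSum n p (fun z : Fin n → ℂ => z l ^ m) z =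
      (m:ℝ) * ‖z l‖ ^ (m-1) * (1 - ‖z l‖ ^ 2) ^ p := by
  rw [blochSum, Finset.sum_eq_single l]
  · rw [fderiv_mono_single l m z l, if_pos rfl, norm_mul, norm_pow, Complex.norm_natCast]
  · intro k _ hk; rw [fderiv_mono_single l m z k, if_neg hk]; simp
  · intro h; exact absurd (Finset.mem_univ l) h

lemma isPolyFn_mono {n : ℕ} (l : Fin n) (m : ℕ) :
    IsPolyFn n (fun z : Fin n → ℂ => z l ^ m) :=
  ⟨MvPolynomial.X l ^ m, fun z => by simp⟩

lemma isPolyFn_prod {n : ℕ} (γ : Fin n → ℕ) :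
    IsPolyFn n (fun z : Fin n → ℂ => ∏ l : Fin n, z l ^ γ l) :=
  ⟨∏ l : Fin n, MvPolynomial.X l ^ γ l, fun z => by simp [MvPolynomial.eval_prod]⟩

lemma blochNorm_mono_le {n : ℕ} {p : ℝ} (hp : 0 < p) (l : Fin n) {m : ℕ} (hm : 1 ≤ m) :
    blochNorm n p (fun z : Fin n → ℂ => z l ^ m) ≤ Bconst p * (m:ℝ) ^ (1-p) := by
  rw [blochNorm]
  have h0 : ‖(fun z : Fin n → ℂ => z l ^ m) 0‖ = 0 := by
    simp [zero_pow (by omega : m ≠ 0)]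
  rw [h0, zero_add]
  apply sSup_blochSum_le
  intro z hz
  rw [blochSum_mono_eq]
  exact mono_upper hp hm (norm_nonneg _) (hz l)

lemma comp_diffOn {n : ℕ} {φ : (Fin n → ℂ) → Fin n → ℂ} (hφ : HoloSelfMap n φ)
    {f : (Fin n → ℂ) → ℂ} (hf : DifferentiableOn ℂ f (polydisc n)) :
    DifferentiableOn ℂ (fun z => f (φ z)) (polydisc n) :=
  hf.comp hφ.1 (fun z hz => hφ.2 z hz)

lemma comp_blochSum_le {n : ℕ} {p q : ℝ} (hp : 0 < p) {φ : (Fin n → ℂ) → Fin n → ℂ}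
    (hφ : HoloSelfMap n φ) {f : (Fin n → ℂ) → ℂ} (hf : MemBloch n p f) {C : ℝ}
    (hC : ∀ z ∈ polydisc n, compSum n p q φ z ≤ C) {z : Fin n → ℂ} (hz : z ∈ polydisc n) :
    blochSum n q (fun z => f (φ z)) z ≤ sSup (blochSum n p f '' polydisc n) * C := by
  set S := sSup (blochSum n p f '' polydisc n) with hS
  have hS0 : 0 ≤ S := sSup_blochSum_nonneg hf.2
  have hφz : φ z ∈ polydisc n := hφ.2 z hz
  have hfd : DifferentiableAt ℂ f (φ z) := diffAt_of_memPolydisc hf.1 hφz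
  calc blochSum n q (fun z => f (φ z)) z
      ≤ ∑ k : Fin n, (∑ l : Fin n, ‖fderiv ℂ φ z (Pi.single k 1) l‖ *
          ‖fderiv ℂ f (φ z) (Pi.single l 1)‖) * (1 - ‖z k‖ ^ 2) ^ q := by
        rw [blochSum]
        apply Finset.sum_le_sum
        intro k _
        apply mul_le_mul_of_nonneg_right _ (Real.rpow_nonneg (one_sub_sq_pos hz k).le q)
        rw [fderiv_comp_single hφ hz hfd k]
        refine le_trans (norm_sum_le _ _) ?_
        apply Finset.sum_le_sum
        intro l _
        rw [norm_mul]
    _ ≤ ∑ k : Fin n, (∑ l : Fin n, ‖fderiv ℂ φ z (Pi.single k 1) l‖ *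
          (S / (1 - ‖φ z l‖ ^ 2) ^ p)) * (1 - ‖z k‖ ^ 2) ^ q := by
        apply Finset.sum_le_sum
        intro k _
        apply mul_le_mul_of_nonneg_right _ (Real.rpow_nonneg (one_sub_sq_pos hz k).le q)
        apply Finset.sum_le_sum
        intro l _
        exact mul_le_mul_of_nonneg_left (deriv_le_of_memBloch hf hφz l) (norm_nonneg _)
    _ = S * compSum n p q φ z := by
        rw [compSum, Finset.mul_sum]
        apply Finset.sum_congr rfl
        intro k _
        rw [Finset.sum_mul, Finset.mul_sum]
        apply Finset.sum_congr rfl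
        intro l _
        ring
    _ ≤ S * C := mul_le_mul_of_nonneg_left (hC z hz) hS0

lemma comp_memBloch {n : ℕ} {p q : ℝ} (hp : 0 < p) {φ : (Fin n → ℂ) → Fin n → ℂ}
    (hφ : HoloSelfMap n φ) {f : (Fin n → ℂ) → ℂ} (hf : MemBloch n p f) {C : ℝ}
    (hC : ∀ z ∈ polydisc n, compSum n p q φ z ≤ C) :
    MemBloch n q (fun z => f (φ z)) := by
  refine ⟨comp_diffOn hφ hf.1, ⟨sSup (blochSum n p f '' polydisc n) * C, ?_⟩⟩
  rintro b ⟨z, hz, rfl⟩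
  exact comp_blochSum_le hp hφ hf hC hz

lemma comp_blochNorm_le {n : ℕ} {p q : ℝ} (hp : 0 < p) {φ : (Fin n → ℂ) → Fin n → ℂ}
    (hφ : HoloSelfMap n φ) {f : (Fin n → ℂ) → ℂ} (hf : MemBloch n p f) {C : ℝ}
    (hC0 : 0 ≤ C) (hC : ∀ z ∈ polydisc n, compSum n p q φ z ≤ C) :
    blochNorm n q (fun z => f (φ z)) ≤
      (1 + (∑ k : Fin n, ((1 - ‖φ 0 k‖ ^ 2) ^ p)⁻¹) + C) * blochNorm n p f := by
  have hφ0 : φ 0 ∈ polydisc n := hφ.2 0 (zero_mem_polydisc n)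
  set K := ∑ k : Fin n, ((1 - ‖φ 0 k‖ ^ 2) ^ p)⁻¹ with hK
  have hK0 : 0 ≤ K := Finset.sum_nonneg fun k _ =>
    inv_nonneg.mpr (Real.rpow_nonneg (one_sub_sq_pos hφ0 k).le p)
  have hbn0 : 0 ≤ blochNorm n p f := blochNorm_nonneg hf.2
  have h1 : ‖f (φ 0)‖ ≤ (1 + K) * blochNorm n p f := growth_lemma hp hf hφ0
  have h2 : sSup (blochSum n q (fun z => f (φ z)) '' polydisc n) ≤ C * blochNorm n p f := by
    apply sSup_blochSum_le
    intro z hz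
    refine le_trans (comp_blochSum_le hp hφ hf hC hz) ?_
    rw [mul_comm]
    apply mul_le_mul_of_nonneg_left _ hC0
    exact le_add_of_nonneg_left (norm_nonneg _)
  rw [blochNorm]
  have : ‖(fun z => f (φ z)) 0‖ = ‖f (φ 0)‖ := rfl
  rw [this]
  nlinarith

lemma poly_comp_memLittleBloch {n : ℕ} {q : ℝ} (hq : 0 < q) {φ : (Fin n → ℂ) → Fin n → ℂ}
    (Hγ : ∀ γ : Fin n → ℕ, MemLittleBloch n q (fun z => ∏ l : Fin n, φ z l ^ γ l))
    {g : (Fin n → ℂ) → ℂ} (hg : IsPolyFn n g) :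
    MemLittleBloch n q (fun z => g (φ z)) := by
  obtain ⟨P, hP⟩ := hg
  have heq : (fun z => g (φ z)) = (fun z => ∑ d ∈ P.support,
      MvPolynomial.coeff d P * ∏ l : Fin n, φ z l ^ d l) := by
    funext z
    rw [hP (φ z), MvPolynomial.eval_eq']
  rw [heq]
  apply MemLittleBloch.finsetSum hq
  intro d _
  exact (Hγ d).smul hq (MvPolynomial.coeff d P)

lemma reverse_direction {n : ℕ} {p q : ℝ} (hp : 0 < p) (hq : 0 < q)
    {φ : (Fin n → ℂ) → Fin n → ℂ} (hφ : HoloSelfMap n φ)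
    (Hγ : ∀ γ : Fin n → ℕ, MemLittleBloch n q (fun z => ∏ l : Fin n, φ z l ^ γ l))
    {C : ℝ} (hC0 : 0 ≤ C) (hC : ∀ z ∈ polydisc n, compSum n p q φ z ≤ C) :
    (∀ f, MemLittleBloch n p f → MemLittleBloch n q (fun z => f (φ z))) ∧
      ∃ C' : ℝ, ∀ f, MemLittleBloch n p f →
        blochNorm n q (fun z => f (φ z)) ≤ C' * blochNorm n p f := by
  set K := ∑ k : Fin n, ((1 - ‖φ 0 k‖ ^ 2) ^ p)⁻¹ with hK
  have hφ0 : φ 0 ∈ polydisc n := hφ.2 0 (zero_mem_polydisc n)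
  have hK0 : 0 ≤ K := Finset.sum_nonneg fun k _ =>
    inv_nonneg.mpr (Real.rpow_nonneg (one_sub_sq_pos hφ0 k).le p)
  set C' := 1 + K + C with hC'
  have hC'0 : 0 < C' := by rw [hC']; linarith
  constructor
  · intro f hf
    refine ⟨comp_memBloch hp hφ hf.1 hC, ?_⟩
    intro ε hε
    obtain ⟨u, hu, hu2⟩ := hf.2 (ε/(2*C')) (by positivity)
    have huB : MemBloch n p u := hu.memBloch hp
    have hfu : MemBloch n p (fun w => f w - u w) := hf.1.sub huB
    have huφ : MemLittleBloch n q (fun z => u (φ z)) := poly_comp_memLittleBloch hq Hγ hu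
    obtain ⟨v, hv, hv2⟩ := huφ.2 (ε/2) (by linarith)
    refine ⟨v, hv, ?_⟩
    have h1 : blochNorm n q (fun z => f (φ z) - u (φ z)) ≤
        C' * blochNorm n p (fun w => f w - u w) :=
      comp_blochNorm_le hp hφ hfu (by linarith) hC
    have h1' : blochNorm n q (fun z => f (φ z) - u (φ z)) < ε/2 := by
      have h3 : C' * blochNorm n p (fun w => f w - u w) < C' * (ε/(2*C')) :=
        mul_lt_mul_of_pos_left hu2 hC'0
      have h4 : C' * (ε/(2*C')) = ε/2 := by field_simp
      calc blochNorm n q (fun z => f (φ z) - u (φ z))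
          ≤ C' * blochNorm n p (fun w => f w - u w) := h1
        _ < C' * (ε/(2*C')) := h3
        _ = ε/2 := h4
    have hmem1 : MemBloch n q (fun z => f (φ z) - u (φ z)) :=
      comp_memBloch hp hφ hfu hC
    have hmem2 : MemBloch n q (fun z => u (φ z) - v z) := huφ.1.sub (hv.memBloch hq)
    have heq : (fun z => f (φ z) - v z) =
        (fun z => (f (φ z) - u (φ z)) + (u (φ z) - v z)) := by funext z; ring
    calc blochNorm n q (fun z => f (φ z) - v z)
        = blochNorm n q (fun z => (f (φ z) - u (φ z)) + (u (φ z) - v z)) := by rw [heq]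
      _ ≤ blochNorm n q (fun z => f (φ z) - u (φ z)) +
          blochNorm n q (fun z => u (φ z) - v z) := blochNorm_add_le hmem1 hmem2
      _ < ε/2 + ε/2 := add_lt_add h1' hv2
      _ = ε := by ring
  · exact ⟨C', fun f hf => comp_blochNorm_le hp hφ hf.1 (by linarith) hC⟩

lemma forward_direction {n : ℕ} {p q : ℝ} (hp : 0 < p) (hq : 0 < q)
    {φ : (Fin n → ℂ) → Fin n → ℂ} (hφ : HoloSelfMap n φ)
    (Hmap : ∀ f, MemLittleBloch n p f → MemLittleBloch n q (fun z => f (φ z)))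
    {C : ℝ} (hC0 : 0 ≤ C)
    (Hbd : ∀ f, MemLittleBloch n p f →
      blochNorm n q (fun z => f (φ z)) ≤ C * blochNorm n p f) :
    ∀ z ∈ polydisc n, compSum n p q φ z ≤
      n * (C * Bconst p / (Real.exp (-2) * (3/4) ^ p)) := by
  intro z hz
  set c := Real.exp (-2) * (3/4 : ℝ) ^ p with hc
  have hcpos : 0 < c := by
    rw [hc]
    exact mul_pos (Real.exp_pos _) (Real.rpow_pos_of_pos (by norm_num) p)
  have hB := Bconst_pos hp
  set D := C * Bconst p / c with hD
  have hD0 : 0 ≤ D := by positivity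
  -- per-column bound
  have hcol : ∀ l : Fin n,
      (∑ k : Fin n, ‖fderiv ℂ φ z (Pi.single k 1) l‖ *
        (1 - ‖z k‖ ^ 2) ^ q) * ((1 - ‖φ z l‖ ^ 2) ^ p)⁻¹ ≤ D := by
    intro l
    set T := ∑ k : Fin n, ‖fderiv ℂ φ z (Pi.single k 1) l‖ *
        (1 - ‖z k‖ ^ 2) ^ q with hT
    have hT0 : 0 ≤ T := Finset.sum_nonneg fun k _ =>
      mul_nonneg (norm_nonneg _) (Real.rpow_nonneg (one_sub_sq_pos hz k).le q)
    set t := ‖φ z l‖ with ht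
    have ht0 : 0 ≤ t := norm_nonneg _
    have ht1 : t < 1 := hφ.2 z hz l
    have he0 : 0 < (1 - t ^ 2) ^ p := Real.rpow_pos_of_pos (by nlinarith) p
    obtain ⟨m, hm, hlow⟩ := mono_lower hp ht0 ht1
    have hM0 : (0:ℝ) < m := by exact_mod_cast hm
    have ha0 : (0:ℝ) < (m:ℝ) ^ p := Real.rpow_pos_of_pos hM0 p
    have hb0 : (0:ℝ) < t ^ (m-1) := by
      have h1 : (0:ℝ) < (m:ℝ) ^ p * t ^ (m-1) * (1 - t^2) ^ p := lt_of_lt_of_le hcpos hlow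
      rcases (pow_nonneg ht0 (m-1)).eq_or_lt with h | h
      · rw [← h] at h1; simp at h1
      · exact h
    -- the monomial test function
    have hmono : MemLittleBloch n p (fun w : Fin n → ℂ => w l ^ m) :=
      (isPolyFn_mono l m).memLittleBloch hp
    have hcomp := Hmap _ hmono
    have hbdc := Hbd _ hmono
    -- compute the bloch sum of the composition
    have hsum : blochSum n q (fun w => (fun w : Fin n → ℂ => w l ^ m) (φ w)) z =
        (m:ℝ) * t ^ (m-1) * T := by
      rw [blochSum, hT, Finset.mul_sum]
      apply Finset.sum_congr rfl
      intro k _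
      have hfd : DifferentiableAt ℂ (fun w : Fin n → ℂ => w l ^ m) (φ z) :=
        (mono_hasFDerivAt l m (φ z)).differentiableAt
      rw [fderiv_comp_single hφ hz hfd k]
      have hterm : ∀ j : Fin n, fderiv ℂ φ z (Pi.single k 1) j *
          fderiv ℂ (fun w : Fin n → ℂ => w l ^ m) (φ z) (Pi.single j 1) =
          if j = l then fderiv ℂ φ z (Pi.single k 1) l * ((m:ℂ) * φ z l ^ (m-1)) else 0 := by
        intro j
        rw [fderiv_mono_single]
        by_cases h : j = l
        · subst h; simp
        · simp [h]
      rw [Finset.sum_congr rfl (fun j _ => hterm j), Finset.sum_ite_eq' Finset.univ l _]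
      simp only [Finset.mem_univ, if_true]
      rw [norm_mul, norm_mul, norm_pow, Complex.norm_natCast, ← ht]
      ring
    have hBdd : BddAbove (blochSum n q (fun w => (fun w : Fin n → ℂ => w l ^ m) (φ w)) ''
        polydisc n) := hcomp.1.2
    have hkey : (m:ℝ) * t ^ (m-1) * T ≤ C * (Bconst p * (m:ℝ) ^ (1-p)) := by
      calc (m:ℝ) * t ^ (m-1) * T
          = blochSum n q (fun w => (fun w : Fin n → ℂ => w l ^ m) (φ w)) z := hsum.symm
        _ ≤ blochNorm n q (fun w => (fun w : Fin n → ℂ => w l ^ m) (φ w)) :=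
            blochSum_le_blochNorm hBdd hz
        _ ≤ C * blochNorm n p (fun w : Fin n → ℂ => w l ^ m) := hbdc
        _ ≤ C * (Bconst p * (m:ℝ) ^ (1-p)) :=
            mul_le_mul_of_nonneg_left (blochNorm_mono_le hp l hm) hC0
    -- algebra
    have hm1p : (m:ℝ) ^ (1-p) * (m:ℝ) ^ p = (m:ℝ) := by
      rw [← Real.rpow_add hM0]
      norm_num
    have hpow1p : (0:ℝ) < (m:ℝ) ^ (1-p) := Real.rpow_pos_of_pos hM0 _
    have key1 : T * ((m:ℝ) ^ p * t ^ (m-1)) ≤ C * Bconst p := by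
      rw [← mul_le_mul_iff_of_pos_right hpow1p]
      have hl : T * ((m:ℝ) ^ p * t ^ (m-1)) * (m:ℝ) ^ (1-p) = (m:ℝ) * t ^ (m-1) * T := by
        conv_rhs => rw [← hm1p]
        ring
      rw [hl]
      calc (m:ℝ) * t ^ (m-1) * T ≤ C * (Bconst p * (m:ℝ) ^ (1-p)) := hkey
        _ = C * Bconst p * (m:ℝ) ^ (1-p) := by ring
    have key2 : T * c ≤ C * Bconst p * (1 - t^2) ^ p := by
      calc T * c ≤ T * ((m:ℝ) ^ p * t ^ (m-1) * (1 - t^2) ^ p) :=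
            mul_le_mul_of_nonneg_left hlow hT0
        _ = (T * ((m:ℝ) ^ p * t ^ (m-1))) * (1 - t^2) ^ p := by ring
        _ ≤ C * Bconst p * (1 - t^2) ^ p := mul_le_mul_of_nonneg_right key1 he0.le
    have key3 : T ≤ D * (1 - t^2) ^ p := by
      rw [hD, div_mul_eq_mul_div, le_div_iff₀ hcpos]
      calc T * c ≤ C * Bconst p * (1 - t^2) ^ p := key2
        _ = C * Bconst p * (1 - t^2) ^ p := rfl
    calc T * ((1 - t ^ 2) ^ p)⁻¹ ≤ (D * (1 - t^2) ^ p) * ((1 - t ^ 2) ^ p)⁻¹ :=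
          mul_le_mul_of_nonneg_right key3 (inv_nonneg.mpr he0.le)
      _ = D := by field_simp
  -- sum over columns
  calc compSum n p q φ z
      = ∑ l : Fin n, (∑ k : Fin n, ‖fderiv ℂ φ z (Pi.single k 1) l‖ *
          (1 - ‖z k‖ ^ 2) ^ q) * ((1 - ‖φ z l‖ ^ 2) ^ p)⁻¹ := by
        rw [compSum, Finset.sum_comm]
        apply Finset.sum_congr rfl
        intro l _
        rw [Finset.sum_mul]
        apply Finset.sum_congr rfl
        intro k _
        rw [div_eq_mul_inv]
        ring
    _ ≤ ∑ _l : Fin n, D := Finset.sum_le_sum fun l _ => hcol l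
    _ = n * D := by rw [Finset.sum_const]; simp [nsmul_eq_mul]
    _ = n * (C * Bconst p / (Real.exp (-2) * (3/4) ^ p)) := by rw [hD, hc]

lemma compSum_nonneg {n : ℕ} {p q : ℝ} {φ : (Fin n → ℂ) → Fin n → ℂ}
    (hφ : HoloSelfMap n φ) {z : Fin n → ℂ} (hz : z ∈ polydisc n) :
    0 ≤ compSum n p q φ z := by
  have hφz := hφ.2 z hz
  apply Finset.sum_nonneg
  intro k _
  apply Finset.sum_nonneg
  intro l _
  apply mul_nonneg (norm_nonneg _)
  apply div_nonneg (Real.rpow_nonneg (one_sub_sq_pos hz k).le q)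
    (Real.rpow_nonneg (one_sub_sq_pos hφz l).le p)

/-- Lemma 5: boundedness of C_φ between little Bloch spaces. -/
theorem comp_bounded_little_iff (n : ℕ) (p q : ℝ) (hp : 0 < p) (hq : 0 < q)
    (φ : (Fin n → ℂ) → Fin n → ℂ) (hφ : HoloSelfMap n φ) :
    ((∀ f, MemLittleBloch n p f → MemLittleBloch n q (fun z => f (φ z))) ∧
      ∃ C : ℝ, ∀ f, MemLittleBloch n p f →
        blochNorm n q (fun z => f (φ z)) ≤ C * blochNorm n p f) ↔
    ((∀ γ : Fin n → ℕ, MemLittleBloch n q (fun z => ∏ l : Fin n, φ z l ^ γ l)) ∧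
      ∃ C : ℝ, ∀ z ∈ polydisc n, compSum n p q φ z ≤ C) := by
  constructor
  · rintro ⟨Hmap, C, Hbd⟩
    have Hbd' : ∀ f, MemLittleBloch n p f →
        blochNorm n q (fun z => f (φ z)) ≤ max C 0 * blochNorm n p f := by
      intro f hf
      calc blochNorm n q (fun z => f (φ z)) ≤ C * blochNorm n p f := Hbd f hf
        _ ≤ max C 0 * blochNorm n p f :=
            mul_le_mul_of_nonneg_right (le_max_left _ _) (blochNorm_nonneg hf.1.2)
    refine ⟨?_, ?_⟩
    · intro γ
      exact Hmap _ ((isPolyFn_prod γ).memLittleBloch hp)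
    · exact ⟨_, forward_direction hp hq hφ Hmap (le_max_right C 0) Hbd'⟩
  · rintro ⟨Hγ, C, hC⟩
    have hC0 : 0 ≤ C := le_trans (compSum_nonneg hφ (zero_mem_polydisc n))
      (hC 0 (zero_mem_polydisc n))
    exact reverse_direction hp hq hφ Hγ hC0 hC
end
end
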